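/- arXiv:1902.05926 — 6 statements merged into one kernel-verified Lean document; each statement's English description precedes it below -/
import Mathlib

section
/- Let ≺ be a transitive relation on ℕ and let RI(≺) be the space of rounded ideals of ≺. Then overt choice for RI(≺) is continuous: there exists a continuous function F, defined on the subspace of Baire space consisting of all p : ℕ → ℕ that enumerate the set {n ∈ ℕ | ∃ I ∈ A, n ∈ I} for some nonempty subset A of RI(≺) that is closed in RI(≺), such that whenever p enumerates {n ∈ ℕ | ∃ I ∈ A, n ∈ I} for such an A, the set enumerated by F p is a rounded ideal belonging to A. -/
/-- `p` enumerates `S` if `S = {n | ∃ k, p k = n + 1}`. -/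
def Enumerates (p : ℕ → ℕ) (S : Set ℕ) : Prop := S = {n | ∃ k, p k = n + 1}

/-- A rounded ideal for a transitive relation on ℕ: nonempty, downward closed, directed. -/
def IsRoundedIdeal (r : ℕ → ℕ → Prop) (I : ℕ → Prop) : Prop :=
  (∃ n, I n) ∧ (∀ x y, r x y → I y → I x) ∧
    (∀ x, I x → ∀ y, I y → ∃ z, I z ∧ r x z ∧ r y z)

/-- The space of rounded ideals, as a subspace of `ℕ → Prop` (with the product of
Sierpiński topologies). -/
abbrev RI (r : ℕ → ℕ → Prop) := {I : ℕ → Prop // IsRoundedIdeal r I}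

open Classical in
/-- Indices of an increasing chain inside the union, read off from `p`. -/
noncomputable def chainIdx (r : ℕ → ℕ → Prop) (p : ℕ → ℕ) : ℕ → ℕ
  | 0 => if h : ∃ j, p j ≠ 0 then Nat.find h else 0
  | k + 1 =>
      if h : ∃ j, p j ≠ 0 ∧ r (p (chainIdx r p k) - 1) (p j - 1) then Nat.find h else 0

open Classical in
/-- The choice function: enumerates the downward closure of the chain. -/
noncomputable def chainF (r : ℕ → ℕ → Prop) (p : ℕ → ℕ) (m : ℕ) : ℕ :=
  if r m.unpair.1 (p (chainIdx r p m.unpair.2) - 1) then m.unpair.1 + 1 else 0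

section Chain

variable {r : ℕ → ℕ → Prop} {p : ℕ → ℕ} {A : Set (RI r)}

/-- Abbreviation for chain elements. -/
noncomputable def chainA (r : ℕ → ℕ → Prop) (p : ℕ → ℕ) (k : ℕ) : ℕ :=
  p (chainIdx r p k) - 1

theorem cond0 (hA : A.Nonempty)
    (hU : Enumerates p {n | ∃ I ∈ A, I.1 n}) : ∃ j, p j ≠ 0 := by
  obtain ⟨I, hI⟩ := hA
  obtain ⟨n, hn⟩ := I.2.1
  have : n ∈ {n | ∃ k, p k = n + 1} := by rw [← hU]; exact ⟨I, hI, hn⟩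
  obtain ⟨j, hj⟩ := this
  exact ⟨j, by omega⟩

theorem condS (hA : A.Nonempty)
    (hU : Enumerates p {n | ∃ I ∈ A, I.1 n}) {k : ℕ}
    (hk : p (chainIdx r p k) ≠ 0) :
    ∃ j, p j ≠ 0 ∧ r (p (chainIdx r p k) - 1) (p j - 1) := by
  have hmem : p (chainIdx r p k) - 1 ∈ {n | ∃ k, p k = n + 1} :=
    ⟨chainIdx r p k, by omega⟩
  rw [← hU] at hmem
  obtain ⟨I, hIA, hI⟩ := hmem
  obtain ⟨z, hz, hrz, -⟩ := I.2.2.2 _ hI _ hI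
  have : z ∈ {n | ∃ k, p k = n + 1} := by rw [← hU]; exact ⟨I, hIA, hz⟩
  obtain ⟨j, hj⟩ := this
  exact ⟨j, by omega, by simpa [Nat.succ_sub_one, hj] using hrz⟩

theorem chain_nz (hA : A.Nonempty)
    (hU : Enumerates p {n | ∃ I ∈ A, I.1 n}) :
    ∀ k, p (chainIdx r p k) ≠ 0 := by
  classical
  intro k
  induction k with
  | zero =>
    have h := cond0 hA hU
    rw [chainIdx, dif_pos h]
    exact Nat.find_spec h
  | succ k ih =>
    have h := condS hA hU ih
    rw [chainIdx, dif_pos h]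
    exact (Nat.find_spec h).1

theorem chain_r (hA : A.Nonempty)
    (hU : Enumerates p {n | ∃ I ∈ A, I.1 n}) (k : ℕ) :
    r (chainA r p k) (chainA r p (k + 1)) := by
  classical
  have h := condS hA hU (chain_nz hA hU k)
  unfold chainA
  rw [chainIdx, dif_pos h]
  exact (Nat.find_spec h).2

theorem chain_r_le (hr : Transitive r) (hA : A.Nonempty)
    (hU : Enumerates p {n | ∃ I ∈ A, I.1 n}) {i k : ℕ} (hik : i ≤ k)
    {x : ℕ} (hx : r x (chainA r p i)) : r x (chainA r p k) := by
  induction k with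
  | zero => exact Nat.le_zero.1 hik ▸ hx
  | succ k ih =>
    rcases Nat.lt_or_ge i (k + 1) with h | h
    · exact hr (ih (by omega)) (chain_r hA hU k)
    · have : i = k + 1 := by omega
      subst this; exact hx

theorem chain_r_le' (hr : Transitive r) (hA : A.Nonempty)
    (hU : Enumerates p {n | ∃ I ∈ A, I.1 n}) :
    ∀ i ≤ 0, True := fun _ _ => trivial

/-- The limit ideal. -/
def chainJ (r : ℕ → ℕ → Prop) (p : ℕ → ℕ) : ℕ → Prop :=
  fun x => ∃ k, r x (chainA r p k)

theorem chainJ_isRoundedIdeal (hr : Transitive r) (hA : A.Nonempty)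
    (hU : Enumerates p {n | ∃ I ∈ A, I.1 n}) :
    IsRoundedIdeal r (chainJ r p) := by
  refine ⟨⟨chainA r p 0, 1, chain_r hA hU 0⟩, ?_, ?_⟩
  · rintro x y hxy ⟨k, hk⟩
    exact ⟨k, hr hxy hk⟩
  · rintro x ⟨j, hj⟩ y ⟨k, hk⟩
    refine ⟨chainA r p (max j k), ⟨max j k + 1, chain_r hA hU _⟩,
      chain_r_le hr hA hU (le_max_left j k) hj,
      chain_r_le hr hA hU (le_max_right j k) hk⟩

theorem chainJ_finite_sub (hr : Transitive r) (hA : A.Nonempty)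
    (hU : Enumerates p {n | ∃ I ∈ A, I.1 n}) (m : ℕ) :
    ∃ I ∈ A, ∀ x ≤ m, chainJ r p x → I.1 x := by
  have key : ∃ K, ∀ x ≤ m, chainJ r p x → r x (chainA r p K) := by
    induction m with
    | zero =>
      by_cases h0 : chainJ r p 0
      · obtain ⟨k, hk⟩ := h0
        exact ⟨k, fun x hx hJ => by interval_cases x; exact hk⟩
      · exact ⟨0, fun x hx hJ => by interval_cases x; exact absurd hJ h0⟩
    | succ m ih =>
      obtain ⟨K, hK⟩ := ih
      by_cases h0 : chainJ r p (m + 1)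
      · obtain ⟨k, hk⟩ := h0
        refine ⟨max K k, fun x hx hJ => ?_⟩
        rcases Nat.lt_or_ge x (m + 1) with h | h
        · exact chain_r_le hr hA hU (le_max_left K k) (hK x (by omega) hJ)
        · have : x = m + 1 := by omega
          subst this
          exact chain_r_le hr hA hU (le_max_right K k) hk
      · refine ⟨K, fun x hx hJ => ?_⟩
        rcases Nat.lt_or_ge x (m + 1) with h | h
        · exact hK x (by omega) hJ
        · have : x = m + 1 := by omega
          subst this; exact absurd hJ h0
  obtain ⟨K, hK⟩ := key
  have hmem : chainA r p K ∈ {n | ∃ k, p k = n + 1} :=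
    ⟨chainIdx r p K, by have := chain_nz hA hU K; unfold chainA; omega⟩
  rw [← hU] at hmem
  obtain ⟨I, hIA, hI⟩ := hmem
  exact ⟨I, hIA, fun x hx hJ => I.2.2.1 _ _ (hK x hx hJ) hI⟩

theorem chainJ_mem (hr : Transitive r) (hA : A.Nonempty) (hcl : IsClosed A)
    (hU : Enumerates p {n | ∃ I ∈ A, I.1 n}) :
    (⟨chainJ r p, chainJ_isRoundedIdeal hr hA hU⟩ : RI r) ∈ A := by
  choose I hIA hI using chainJ_finite_sub hr hA hU
  refine hcl.mem_of_tendsto ?_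
    ((Filter.Eventually.of_forall hIA : ∀ᶠ m in Filter.atTop, I m ∈ A))
  rw [tendsto_subtype_rng, tendsto_pi_nhds]
  intro n
  rw [tendsto_nhds_Prop]
  intro hn
  filter_upwards [Filter.eventually_ge_atTop n] with m hm
  exact hI m n hm hn

end Chain

section Agree

variable {r : ℕ → ℕ → Prop} {p : ℕ → ℕ} {A : Set (RI r)}

theorem findCongr {P Q : ℕ → Prop} [DecidablePred P] [DecidablePred Q]
    (hP : ∃ n, P n) (hQ : ∃ n, Q n) {M : ℕ} (hPM : Nat.find hP ≤ M)
    (hag : ∀ n ≤ M, (P n ↔ Q n)) : Nat.find hP = Nat.find hQ := by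
  have h1 : Nat.find hQ ≤ Nat.find hP :=
    Nat.find_min' hQ ((hag _ hPM).1 (Nat.find_spec hP))
  exact le_antisymm
    (Nat.find_min' hP ((hag _ (le_trans h1 hPM)).2 (Nat.find_spec hQ))) h1

theorem idx_agree (hA : A.Nonempty)
    (hU : Enumerates p {n | ∃ I ∈ A, I.1 n}) (k : ℕ) (q : ℕ → ℕ)
    (hq : ∀ j ≤ (Finset.range (k + 1)).sup (chainIdx r p), q j = p j) :
    ∀ i ≤ k, chainIdx r q i = chainIdx r p i := by
  classical
  set M := (Finset.range (k + 1)).sup (chainIdx r p) with hM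
  have hle : ∀ i ≤ k, chainIdx r p i ≤ M := fun i hi =>
    Finset.le_sup (Finset.mem_range.2 (by omega))
  intro i
  induction i with
  | zero =>
    intro h0k
    have hP := cond0 hA hU
    have hfind : chainIdx r p 0 = Nat.find hP := by rw [chainIdx, dif_pos hP]
    have hag : ∀ n ≤ M, (p n ≠ 0 ↔ q n ≠ 0) := fun n hn => by rw [hq n hn]
    have hQ : ∃ j, q j ≠ 0 :=
      ⟨Nat.find hP, (hag _ (hfind ▸ hle 0 h0k)).1 (Nat.find_spec hP)⟩
    rw [chainIdx, dif_pos hQ, hfind]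
    exact (findCongr hP hQ (hfind ▸ hle 0 h0k) hag).symm
  | succ i ih =>
    intro hik
    have hii : i ≤ k := by omega
    have hIH := ih hii
    have hqa : q (chainIdx r p i) = p (chainIdx r p i) := hq _ (hle i hii)
    have hP := condS hA hU (chain_nz hA hU i)
    have hfind : chainIdx r p (i + 1) = Nat.find hP := by rw [chainIdx, dif_pos hP]
    have hag : ∀ n ≤ M,
        ((p n ≠ 0 ∧ r (p (chainIdx r p i) - 1) (p n - 1)) ↔
          (q n ≠ 0 ∧ r (p (chainIdx r p i) - 1) (q n - 1))) := fun n hn => by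
      rw [hq n hn]
    have hQ : ∃ j, q j ≠ 0 ∧ r (p (chainIdx r p i) - 1) (q j - 1) :=
      ⟨Nat.find hP, (hag _ (hfind ▸ hle (i + 1) hik)).1 (Nat.find_spec hP)⟩
    rw [chainIdx, hIH, hqa, dif_pos hQ, hfind]
    exact (findCongr hP hQ (hfind ▸ hle (i + 1) hik) hag).symm

theorem F_agree (hA : A.Nonempty)
    (hU : Enumerates p {n | ∃ I ∈ A, I.1 n}) (m : ℕ) (q : ℕ → ℕ)
    (hq : ∀ j ≤ (Finset.range (m.unpair.2 + 1)).sup (chainIdx r p), q j = p j) :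
    chainF r q m = chainF r p m := by
  have h1 : chainIdx r q m.unpair.2 = chainIdx r p m.unpair.2 :=
    idx_agree hA hU m.unpair.2 q hq m.unpair.2 le_rfl
  have h2 : q (chainIdx r p m.unpair.2) = p (chainIdx r p m.unpair.2) :=
    hq _ (Finset.le_sup (Finset.mem_range.2 (by omega)))
  unfold chainF
  rw [h1, h2]

end Agree

/-- Overt choice for the space of rounded ideals of a transitive relation is continuous. -/
theorem overt_choice_roundedIdeals_continuous (r : ℕ → ℕ → Prop) (hr : Transitive r) :
    ∃ F : (ℕ → ℕ) → (ℕ → ℕ),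
      ContinuousOn F {p | ∃ A : Set (RI r), A.Nonempty ∧ IsClosed A ∧
        Enumerates p {n | ∃ I ∈ A, I.1 n}} ∧
      ∀ (p : ℕ → ℕ) (A : Set (RI r)), A.Nonempty → IsClosed A →
        Enumerates p {n | ∃ I ∈ A, I.1 n} →
        ∃ I ∈ A, Enumerates (F p) {n | I.1 n} := by
  classical
  refine ⟨chainF r, ?_, ?_⟩
  · -- continuity
    intro p hp
    obtain ⟨A, hA, hcl, hU⟩ := hp
    apply ContinuousAt.continuousWithinAt
    rw [continuousAt_pi]
    intro m
    set M := (Finset.range (m.unpair.2 + 1)).sup (chainIdx r p) with hM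
    have hev : ∀ j, ∀ᶠ q in nhds p, q j = p j := by
      intro j
      have hopen : IsOpen ((fun q : ℕ → ℕ => q j) ⁻¹' {p j}) :=
        (isOpen_discrete ({p j} : Set ℕ)).preimage (continuous_apply j)
      exact hopen.mem_nhds rfl
    have hev2 : ∀ᶠ q in nhds p, ∀ j ∈ Finset.range (M + 1), q j = p j :=
      (Finset.range (M + 1)).eventually_all.2 fun j _ => hev j
    have key : ∀ᶠ q in nhds p, chainF r q m = chainF r p m := by
      filter_upwards [hev2] with q hq
      exact F_agree hA hU m q fun j hj => hq j (Finset.mem_range.2 (by omega))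
    unfold ContinuousAt
    rw [nhds_discrete ℕ]
    exact Filter.tendsto_pure.2 key
  · -- choice
    intro p A hA hcl hU
    refine ⟨⟨chainJ r p, chainJ_isRoundedIdeal hr hA hU⟩, chainJ_mem hr hA hcl hU, ?_⟩
    unfold Enumerates
    ext n
    simp only [Set.mem_setOf_eq]
    constructor
    · rintro ⟨k, hk⟩
      refine ⟨Nat.pair n k, ?_⟩
      have hk' : r n (p (chainIdx r p k) - 1) := hk
      simp [chainF, Nat.unpair_pair, hk']
    · rintro ⟨m, hm⟩
      unfold chainF at hm
      by_cases h : r m.unpair.1 (p (chainIdx r p m.unpair.2) - 1)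
      · rw [if_pos h] at hm
        have : m.unpair.1 = n := by omega
        exact ⟨m.unpair.2, this ▸ h⟩
      · rw [if_neg h] at hm
        omega
end

section
/- For every nonempty G_δ subset A of Baire space ℕ → ℕ there exists a continuous function f : (ℕ → ℕ) → (ℕ → ℕ) whose range is exactly A, such that f maps every open subset of ℕ → ℕ to a relatively open subset of A (in the subspace topology), and such that there exists a continuous function g : A → (ℕ → ℕ) (A with the subspace topology) with f (g x) = x for all x ∈ A. -/
open Set

namespace BaireGdeltaAux

/-- `Pre t y` : the list `t` is an initial segment of the sequence `y`. -/
def Pre (t : List ℕ) (y : ℕ → ℕ) : Prop := ∀ i < t.length, y i = t.getD i 0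

/-- The basic clopen cylinder determined by a finite sequence. -/
def cyl (t : List ℕ) : Set (ℕ → ℕ) := {y | Pre t y}

lemma pre_nil (y : ℕ → ℕ) : Pre [] y := by intro i hi; simp at hi

lemma isOpen_cyl (t : List ℕ) : IsOpen (cyl t) := by
  have : cyl t = ⋂ i ∈ Finset.range t.length, (fun y : ℕ → ℕ => y i) ⁻¹' {t.getD i 0} := by
    ext y
    simp [cyl, Pre, Set.mem_iInter]
  rw [this]
  exact isOpen_biInter_finset fun i _ =>
    (continuous_apply i).isOpen_preimage _ (isOpen_discrete _)

lemma getD_agree {s t : List ℕ} (h : s <+: t) {i : ℕ} (hi : i < s.length) :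
    s.getD i 0 = t.getD i 0 := by
  rw [List.getD_eq_getElem s 0 hi, List.getD_eq_getElem t 0 (lt_of_lt_of_le hi h.length_le)]
  exact h.getElem hi

lemma pre_mono {s t : List ℕ} (h : s <+: t) {y : ℕ → ℕ} (hy : Pre t y) : Pre s y := by
  intro i hi
  rw [hy i (lt_of_lt_of_le hi h.length_le), getD_agree h hi]

lemma cyl_mono {s t : List ℕ} (h : s <+: t) : cyl t ⊆ cyl s := fun _ hy => pre_mono h hy

lemma prefix_of_pre {s t : List ℕ} {a : ℕ → ℕ} (hs : Pre s a) (ht : Pre t a)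
    (h : s.length ≤ t.length) : s <+: t := by
  rw [List.prefix_iff_eq_take]
  apply List.ext_getElem
  · simp [h]
  · intro i h1 h2
    have h2' : i < t.length := lt_of_lt_of_le h1 h
    rw [List.getElem_take]
    rw [← List.getD_eq_getElem s 0 h1, ← List.getD_eq_getElem t 0 h2']
    rw [← hs i h1, ← ht i h2']

/-- The restriction of a sequence to its first `m` values, as a list. -/
def res (x : ℕ → ℕ) (m : ℕ) : List ℕ := List.ofFn fun i : Fin m => x i

@[simp] lemma res_length (x : ℕ → ℕ) (m : ℕ) : (res x m).length = m := by
  simp [res]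

lemma pre_res (x : ℕ → ℕ) (m : ℕ) : Pre (res x m) x := by
  intro i hi
  rw [res_length] at hi
  rw [List.getD_eq_getElem _ 0 (by simpa using hi)]
  simp [res]

lemma res_eq_of_pre {s : List ℕ} {x : ℕ → ℕ} (h : Pre s x) : res x s.length = s := by
  apply List.ext_getElem (by simp)
  intro i h1 h2
  have : x i = s.getD i 0 := h i h2
  rw [List.getD_eq_getElem _ 0 h2] at this
  simp [res, this]

lemma res_prefix (x : ℕ → ℕ) {m m' : ℕ} (h : m ≤ m') : res x m <+: res x m' :=
  prefix_of_pre (pre_res x m) (pre_res x m') (by simpa using h)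

lemma res_succ (x : ℕ → ℕ) (m : ℕ) : res x (m + 1) = res x m ++ [x m] := by
  simp only [res, List.ofFn_succ']
  simp [List.concat_eq_append, Fin.castSucc]

lemma exists_cyl_subset {V : Set (ℕ → ℕ)} (hV : IsOpen V) {a : ℕ → ℕ} (ha : a ∈ V) :
    ∃ m, cyl (res a m) ⊆ V := by
  obtain ⟨I, u, h1, h2⟩ := isOpen_pi_iff.1 hV a ha
  refine ⟨(I.sup id) + 1, fun y hy => h2 ?_⟩
  intro i hi
  have hilt : i < (I.sup id) + 1 := Nat.lt_succ_of_le (Finset.le_sup (f := id) hi)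
  have := hy i (by simpa using hilt)
  rw [List.getD_eq_getElem _ 0 (by simpa using hilt)] at this
  simp only [res, List.getElem_ofFn] at this
  rw [this]
  exact (h1 i hi).2

section Scheme

variable (U : ℕ → Set (ℕ → ℕ)) (A : Set (ℕ → ℕ))

/-- The set of minimal proper extensions `t` of `u` whose cylinder is inside `U n`
and still meets `A`. -/
def Ext (n : ℕ) (u : List ℕ) : Set (List ℕ) :=
  {t | u <+: t ∧ u ≠ t ∧ cyl t ⊆ U n ∧ (cyl t ∩ A).Nonempty ∧
    ∀ t', u <+: t' → t' <+: t → u ≠ t' → t' ≠ t → ¬ cyl t' ⊆ U n}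

lemma ext_antichain {n : ℕ} {u t₁ t₂ : List ℕ} {a : ℕ → ℕ}
    (h₁ : t₁ ∈ Ext U A n u) (h₂ : t₂ ∈ Ext U A n u)
    (p₁ : Pre t₁ a) (p₂ : Pre t₂ a) : t₁ = t₂ := by
  have key : ∀ s₁ s₂ : List ℕ, s₁ ∈ Ext U A n u → s₂ ∈ Ext U A n u → s₁ <+: s₂ → s₁ = s₂ := by
    intro s₁ s₂ hm₁ hm₂ hp
    by_contra hne
    exact hm₂.2.2.2.2 s₁ hm₁.1 hp hm₁.2.1 hne hm₁.2.2.1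
  rcases le_total t₁.length t₂.length with h | h
  · exact key _ _ h₁ h₂ (prefix_of_pre p₁ p₂ h)
  · exact (key _ _ h₂ h₁ (prefix_of_pre p₂ p₁ h)).symm

lemma exists_ext (hU : ∀ n, IsOpen (U n)) (hA : A = ⋂ n, U n)
    {a : ℕ → ℕ} {u : List ℕ} (n : ℕ) (ha : a ∈ A) (hu : Pre u a) :
    ∃ t ∈ Ext U A n u, Pre t a := by
  have haU : a ∈ U n := by
    rw [hA] at ha; exact Set.mem_iInter.1 ha n
  obtain ⟨m, hm⟩ := exists_cyl_subset (hU n) haU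
  set S : Set ℕ := {k | u.length < k ∧ cyl (res a k) ⊆ U n} with hS
  have hSne : S.Nonempty := by
    refine ⟨max m (u.length + 1), ?_, ?_⟩
    · exact lt_of_lt_of_le (Nat.lt_succ_self _) (le_max_right _ _)
    · exact subset_trans (cyl_mono (res_prefix a (le_max_left _ _))) hm
  set k := sInf S with hk
  have hkS : k ∈ S := Nat.sInf_mem hSne
  have hulen : u.length < k := hkS.1
  have hpre : Pre (res a k) a := pre_res a k
  have hupre : u <+: res a k := prefix_of_pre hu hpre (by simpa using hulen.le)
  have hune : u ≠ res a k := by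
    intro h
    have := congrArg List.length h
    rw [res_length] at this
    omega
  refine ⟨res a k, ⟨hupre, hune, hkS.2, ⟨a, hpre, ha⟩, ?_⟩, hpre⟩
  intro t' h1 h2 h3 h4 hsub
  have hpre' : Pre t' a := pre_mono h2 hpre
  have ht'eq : res a t'.length = t' := res_eq_of_pre hpre'
  have hlen1 : u.length < t'.length := by
    rcases lt_or_eq_of_le h1.length_le with h | h
    · exact h
    · exact absurd (h1.eq_of_length h) h3
  have hlen2 : t'.length < k := by
    have := h2.length_le
    rw [res_length] at this
    rcases lt_or_eq_of_le this with h | h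
    · exact h
    · exact absurd (h2.eq_of_length (by rw [res_length]; exact h)) h4
  have : t'.length ∈ S := ⟨hlen1, by rw [ht'eq]; exact hsub⟩
  exact Nat.notMem_of_lt_sInf hlen2 this

open Classical in
/-- An enumeration of `Ext U A n u` (junk if it is empty). -/
noncomputable def enum (n : ℕ) (u : List ℕ) : ℕ → List ℕ :=
  if h : (Ext U A n u).Nonempty then
    (Set.Countable.exists_eq_range (Set.to_countable _) h).choose
  else fun _ => u ++ [0]

lemma enum_mem {n : ℕ} {u : List ℕ} (h : (Ext U A n u).Nonempty) (k : ℕ) :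
    enum U A n u k ∈ Ext U A n u := by
  rw [enum, dif_pos h]
  have hspec := (Set.Countable.exists_eq_range (Set.to_countable _) h).choose_spec
  have : (Set.Countable.exists_eq_range (Set.to_countable _) h).choose k ∈
      Set.range (Set.Countable.exists_eq_range (Set.to_countable _) h).choose :=
    Set.mem_range_self k
  rwa [← hspec] at this

lemma enum_surj {n : ℕ} {u : List ℕ} (h : (Ext U A n u).Nonempty) {t : List ℕ}
    (ht : t ∈ Ext U A n u) : ∃ k, enum U A n u k = t := by
  rw [enum, dif_pos h]
  have := (Set.Countable.exists_eq_range (Set.to_countable _) h).choose_spec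
  rw [this] at ht
  exact ht

/-- The scheme map, defined by recursion on reversed lists. -/
noncomputable def sigAux : List ℕ → List ℕ
  | [] => []
  | n :: s => enum U A s.length (sigAux s) n

noncomputable def sig (s : List ℕ) : List ℕ := sigAux U A s.reverse

@[simp] lemma sig_nil : sig U A [] = [] := rfl

lemma sig_append (s : List ℕ) (n : ℕ) :
    sig U A (s ++ [n]) = enum U A s.length (sig U A s) n := by
  show sigAux U A (s ++ [n]).reverse = _
  rw [List.reverse_append]
  show sigAux U A (n :: s.reverse) = _
  show enum U A s.reverse.length (sigAux U A s.reverse) n = _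
  rw [List.length_reverse]
  rfl

variable (hU : ∀ n, IsOpen (U n)) (hA : A = ⋂ n, U n) (hne : A.Nonempty)

include hU hA hne

lemma sig_nonempty : ∀ s : List ℕ, (cyl (sig U A s) ∩ A).Nonempty := by
  intro s
  induction s using List.reverseRecOn with
  | nil =>
    obtain ⟨a, ha⟩ := hne
    exact ⟨a, pre_nil a, ha⟩
  | append_singleton s n ih =>
    obtain ⟨a, hpa, ha⟩ := ih
    obtain ⟨t, ht, -⟩ := exists_ext U A hU hA s.length ha hpa
    have hExt : (Ext U A s.length (sig U A s)).Nonempty := ⟨t, ht⟩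
    have := enum_mem U A hExt n
    rw [← sig_append] at this
    exact this.2.2.2.1

lemma sig_mem_ext (s : List ℕ) (n : ℕ) :
    sig U A (s ++ [n]) ∈ Ext U A s.length (sig U A s) := by
  obtain ⟨a, hpa, ha⟩ := sig_nonempty U A hU hA hne s
  obtain ⟨t, ht, -⟩ := exists_ext U A hU hA s.length ha hpa
  have hExt : (Ext U A s.length (sig U A s)).Nonempty := ⟨t, ht⟩
  have := enum_mem U A hExt n
  rw [← sig_append] at this
  exact this

lemma sig_prefix_append (s : List ℕ) (n : ℕ) : sig U A s <+: sig U A (s ++ [n]) :=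
  (sig_mem_ext U A hU hA hne s n).1

lemma sig_length_lt (s : List ℕ) (n : ℕ) :
    (sig U A s).length < (sig U A (s ++ [n])).length := by
  have h := sig_mem_ext U A hU hA hne s n
  rcases lt_or_eq_of_le h.1.length_le with h' | h'
  · exact h'
  · exact absurd (h.1.eq_of_length h') h.2.1

lemma sig_mono : ∀ {s t : List ℕ}, s <+: t → sig U A s <+: sig U A t := by
  intro s t
  induction t using List.reverseRecOn with
  | nil =>
    intro h
    rw [List.prefix_nil.1 h]
  | append_singleton t n ih =>
    intro h
    rcases List.prefix_concat_iff.1 h with h | h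
    · rw [h]
    · exact (ih h).trans (sig_prefix_append U A hU hA hne t n)

lemma sig_length_ge : ∀ s : List ℕ, s.length ≤ (sig U A s).length := by
  intro s
  induction s using List.reverseRecOn with
  | nil => simp
  | append_singleton s n ih =>
    have := sig_length_lt U A hU hA hne s n
    simp only [List.length_append, List.length_cons, List.length_nil]
    omega

lemma sig_cyl_subset (s : List ℕ) (n : ℕ) :
    cyl (sig U A (s ++ [n])) ⊆ U s.length :=
  (sig_mem_ext U A hU hA hne s n).2.2.1

lemma sig_exists_pre {a : ℕ → ℕ} {s : List ℕ} (ha : a ∈ A) (hp : Pre (sig U A s) a) :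
    ∃ n, Pre (sig U A (s ++ [n])) a := by
  obtain ⟨t, ht, hpt⟩ := exists_ext U A hU hA s.length ha hp
  obtain ⟨k, hk⟩ := enum_surj U A ⟨t, ht⟩ ht
  refine ⟨k, ?_⟩
  rw [sig_append, hk]
  exact hpt

lemma sig_unique {a : ℕ → ℕ} {s : List ℕ} {n m : ℕ}
    (p₁ : Pre (sig U A (s ++ [n])) a) (p₂ : Pre (sig U A (s ++ [m])) a) :
    sig U A (s ++ [n]) = sig U A (s ++ [m]) :=
  ext_antichain U A (sig_mem_ext U A hU hA hne s n) (sig_mem_ext U A hU hA hne s m) p₁ p₂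

omit hU hA hne

/-- The continuous open surjection onto `A`. -/
noncomputable def fdef (x : ℕ → ℕ) : ℕ → ℕ := fun n => (sig U A (res x (n + 1))).getD n 0

include hU hA hne

lemma pre_sig_res (x : ℕ → ℕ) (m : ℕ) : Pre (sig U A (res x m)) (fdef U A x) := by
  intro i hi
  show (sig U A (res x (i + 1))).getD i 0 = _
  rcases le_total (i + 1) m with h | h
  · have hpre : sig U A (res x (i + 1)) <+: sig U A (res x m) :=
      sig_mono U A hU hA hne (res_prefix x h)
    exact getD_agree hpre (lt_of_lt_of_le (Nat.lt_succ_self i)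
      (by simpa using sig_length_ge U A hU hA hne (res x (i + 1))))
  · have hpre : sig U A (res x m) <+: sig U A (res x (i + 1)) :=
      sig_mono U A hU hA hne (res_prefix x h)
    exact (getD_agree hpre hi).symm

lemma fdef_mem (x : ℕ → ℕ) : fdef U A x ∈ A := by
  have main : fdef U A x ∈ ⋂ n, U n := by
    refine Set.mem_iInter.2 fun n => ?_
    have h1 : Pre (sig U A (res x (n + 1))) (fdef U A x) := pre_sig_res U A hU hA hne x (n + 1)
    have h2 : cyl (sig U A (res x (n + 1))) ⊆ U n := by
      have := sig_cyl_subset U A hU hA hne (res x n) (x n)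
      rw [← res_succ, res_length] at this
      exact this
    exact h2 h1
  rwa [← hA] at main

/-- One step of the canonical branch selection for a point of `A`. -/
noncomputable def step (a : ℕ → ℕ) (t : List ℕ) : List ℕ :=
  t ++ [sInf {n | Pre (sig U A (t ++ [n])) a}]

noncomputable def F (a : ℕ → ℕ) (s : List ℕ) (k : ℕ) : List ℕ := (step U A a)^[k] s

omit hU hA hne

lemma F_zero (a : ℕ → ℕ) (s : List ℕ) : F U A a s 0 = s := rfl

lemma F_succ (a : ℕ → ℕ) (s : List ℕ) (k : ℕ) :
    F U A a s (k + 1) = step U A a (F U A a s k) :=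
  Function.iterate_succ_apply' _ _ _

lemma F_length (a : ℕ → ℕ) (s : List ℕ) (k : ℕ) :
    (F U A a s k).length = s.length + k := by
  induction k with
  | zero => rfl
  | succ k ih => rw [F_succ]; simp [step, ih]; omega

lemma F_prefix_succ (a : ℕ → ℕ) (s : List ℕ) (k : ℕ) :
    F U A a s k <+: F U A a s (k + 1) := by
  rw [F_succ]; exact List.prefix_append _ _

lemma F_prefix (a : ℕ → ℕ) (s : List ℕ) {k k' : ℕ} (h : k ≤ k') :
    F U A a s k <+: F U A a s k' := by
  obtain ⟨d, rfl⟩ := Nat.exists_eq_add_of_le h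
  clear h
  induction d with
  | zero => exact List.prefix_refl _
  | succ d ih => exact ih.trans (F_prefix_succ U A a s (k + d))

include hU hA hne

lemma F_pre {a : ℕ → ℕ} {s : List ℕ} (ha : a ∈ A) (hp : Pre (sig U A s) a) (k : ℕ) :
    Pre (sig U A (F U A a s k)) a := by
  induction k with
  | zero => exact hp
  | succ k ih =>
    rw [F_succ]
    have hS : {n | Pre (sig U A (F U A a s k ++ [n])) a}.Nonempty :=
      sig_exists_pre U A hU hA hne ha ih
    have := Nat.sInf_mem hS
    exact this

/-- The canonical branch, as a sequence. -/
noncomputable def gseq (a : ℕ → ℕ) (s : List ℕ) : ℕ → ℕ :=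
  fun i => (F U A a s (i + 1)).getD i 0

omit hU hA hne

lemma res_gseq_prefix (a : ℕ → ℕ) (s : List ℕ) (m : ℕ) :
    res (gseq U A a s) m <+: F U A a s m := by
  rw [List.prefix_iff_eq_take]
  apply List.ext_getElem
  · rw [res_length, List.length_take, F_length]; omega
  · intro i h1 h2
    rw [res_length] at h1
    rw [List.getElem_take]
    simp only [res, List.getElem_ofFn]
    have hik : i < (F U A a s (i + 1)).length := by rw [F_length]; omega
    have hpre : F U A a s (i + 1) <+: F U A a s m := F_prefix U A a s h1
    show (F U A a s (i + 1)).getD i 0 = _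
    rw [List.getD_eq_getElem _ 0 hik]
    exact hpre.getElem hik

lemma pre_gseq (a : ℕ → ℕ) (s : List ℕ) : Pre s (gseq U A a s) := by
  intro i hi
  show (F U A a s (i + 1)).getD i 0 = _
  have hpre : F U A a s 0 <+: F U A a s (i + 1) := F_prefix U A a s (Nat.zero_le _)
  rw [F_zero] at hpre
  exact (getD_agree hpre hi).symm

include hU hA hne

lemma fdef_gseq {a : ℕ → ℕ} {s : List ℕ} (ha : a ∈ A) (hp : Pre (sig U A s) a) :
    fdef U A (gseq U A a s) = a := by
  funext n
  show (sig U A (res (gseq U A a s) (n + 1))).getD n 0 = a n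
  have h1 : sig U A (res (gseq U A a s) (n + 1)) <+: sig U A (F U A a s (n + 1)) :=
    sig_mono U A hU hA hne (res_gseq_prefix U A a s (n + 1))
  have h2 : Pre (sig U A (F U A a s (n + 1))) a := F_pre U A hU hA hne ha hp (n + 1)
  have h3 : Pre (sig U A (res (gseq U A a s) (n + 1))) a := pre_mono h1 h2
  have hlen : n < (sig U A (res (gseq U A a s) (n + 1))).length :=
    lt_of_lt_of_le (Nat.lt_succ_self n)
      (by simpa using sig_length_ge U A hU hA hne (res (gseq U A a s) (n + 1)))
  exact (h3 n hlen).symm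

lemma image_cyl (s : List ℕ) : fdef U A '' cyl s = cyl (sig U A s) ∩ A := by
  apply Set.Subset.antisymm
  · rintro _ ⟨x, hx, rfl⟩
    refine ⟨?_, fdef_mem U A hU hA hne x⟩
    have : res x s.length = s := res_eq_of_pre hx
    have h := pre_sig_res U A hU hA hne x s.length
    rw [this] at h
    exact h
  · rintro a ⟨hpa, ha⟩
    exact ⟨gseq U A a s, pre_gseq U A a s, fdef_gseq U A hU hA hne ha hpa⟩

lemma fdef_continuous : Continuous (fdef U A) := by
  apply continuous_pi
  intro n
  have : (fun x => fdef U A x n) =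
      (fun v : Fin (n + 1) → ℕ => (sig U A (List.ofFn v)).getD n 0) ∘
        (fun x (i : Fin (n + 1)) => x i) := rfl
  rw [this]
  exact (continuous_of_discreteTopology).comp (continuous_pi fun i => continuous_apply (i : ℕ))

lemma F_locally_constant (k : ℕ) :
    IsLocallyConstant (fun a : A => F U A (a : ℕ → ℕ) [] k) := by
  induction k with
  | zero => exact IsLocallyConstant.const _
  | succ k ih =>
    rw [IsLocallyConstant.iff_exists_open]
    intro a₀
    obtain ⟨W, hWopen, ha₀W, hW⟩ := ih.exists_open a₀
    set t := F U A (a₀ : ℕ → ℕ) [] k with ht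
    set S₀ : Set ℕ := {n | Pre (sig U A (t ++ [n])) (a₀ : ℕ → ℕ)} with hS₀
    have hpa₀ : Pre (sig U A ([] : List ℕ)) (a₀ : ℕ → ℕ) := by
      rw [sig_nil]; exact pre_nil _
    have hS₀ne : S₀.Nonempty := sig_exists_pre U A hU hA hne a₀.2 (F_pre U A hU hA hne a₀.2 hpa₀ k)
    set n₀ := sInf S₀ with hn₀
    have hn₀S : n₀ ∈ S₀ := Nat.sInf_mem hS₀ne
    set W₂ : Set A := Subtype.val ⁻¹' cyl (sig U A (t ++ [n₀])) with hW₂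
    refine ⟨W ∩ W₂, hWopen.inter ((isOpen_cyl _).preimage continuous_subtype_val),
      ⟨ha₀W, hn₀S⟩, ?_⟩
    rintro b ⟨hbW, hbW₂⟩
    have hFb : F U A (b : ℕ → ℕ) [] k = t := hW b hbW
    have hFa₀ : F U A (a₀ : ℕ → ℕ) [] (k + 1) = t ++ [n₀] := by
      rw [F_succ]
      rfl
    rw [F_succ, hFb, hFa₀]
    show step U A (b : ℕ → ℕ) t = t ++ [n₀]
    unfold step
    congr 1
    set Sb : Set ℕ := {n | Pre (sig U A (t ++ [n])) (b : ℕ → ℕ)} with hSb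
    have hn₀Sb : n₀ ∈ Sb := hbW₂
    have hSbne : Sb.Nonempty := ⟨n₀, hn₀Sb⟩
    set n₁ := sInf Sb with hn₁
    have hn₁Sb : n₁ ∈ Sb := Nat.sInf_mem hSbne
    have hle : n₁ ≤ n₀ := Nat.sInf_le hn₀Sb
    have heq : sig U A (t ++ [n₁]) = sig U A (t ++ [n₀]) :=
      sig_unique U A hU hA hne hn₁Sb hn₀Sb
    have hn₁S₀ : n₁ ∈ S₀ := by
      show Pre (sig U A (t ++ [n₁])) (a₀ : ℕ → ℕ)
      rw [heq]
      exact hn₀S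
    have hge : n₀ ≤ n₁ := Nat.sInf_le hn₁S₀
    simp only [List.cons.injEq, and_true]
    omega

end Scheme

end BaireGdeltaAux

open BaireGdeltaAux in
/-- For every nonempty Gδ subset `A` of Baire space there is a continuous `f` with range
exactly `A`, mapping open sets to relatively open subsets of `A`, which admits a continuous
right inverse `g : A → ℕ → ℕ`. -/
theorem exists_open_continuous_surjection_onto_Gdelta
    (A : Set (ℕ → ℕ)) (hne : A.Nonempty) (hGδ : IsGδ A) :
    ∃ f : (ℕ → ℕ) → (ℕ → ℕ), Continuous f ∧ Set.range f = A ∧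
      (∀ U : Set (ℕ → ℕ), IsOpen U → ∃ V : Set (ℕ → ℕ), IsOpen V ∧ f '' U = V ∩ A) ∧
      ∃ g : A → (ℕ → ℕ), Continuous g ∧ ∀ x : A, f (g x) = (x : ℕ → ℕ) := by
  obtain ⟨U, hU, hA⟩ := hGδ.eq_iInter_nat
  refine ⟨fdef U A, fdef_continuous U A hU hA hne, ?_, ?_, ?_⟩
  · -- range = A
    apply Set.Subset.antisymm
    · rintro _ ⟨x, rfl⟩
      exact fdef_mem U A hU hA hne x
    · intro a ha
      refine ⟨gseq U A a [], ?_⟩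
      exact fdef_gseq U A hU hA hne ha (by rw [sig_nil]; exact pre_nil a)
  · -- open map
    intro Uo hUo
    refine ⟨⋃ s : {s : List ℕ // cyl s ⊆ Uo}, cyl (sig U A (s : List ℕ)),
      isOpen_iUnion fun s => isOpen_cyl _, ?_⟩
    apply Set.Subset.antisymm
    · rintro _ ⟨x, hx, rfl⟩
      obtain ⟨m, hm⟩ := exists_cyl_subset hUo hx
      refine ⟨Set.mem_iUnion.2 ⟨⟨res x m, hm⟩, ?_⟩, fdef_mem U A hU hA hne x⟩
      exact pre_sig_res U A hU hA hne x m
    · rintro a ⟨haV, haA⟩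
      obtain ⟨s, hs⟩ := Set.mem_iUnion.1 haV
      have : a ∈ fdef U A '' cyl (s : List ℕ) := by
        rw [image_cyl U A hU hA hne]
        exact ⟨hs, haA⟩
      exact Set.image_mono s.2 this
  · -- continuous section
    refine ⟨fun a => gseq U A (a : ℕ → ℕ) [], ?_, ?_⟩
    · apply continuous_pi
      intro i
      have : (fun a : A => gseq U A (a : ℕ → ℕ) [] i) =
          (fun l : List ℕ => l.getD i 0) ∘ (fun a : A => F U A (a : ℕ → ℕ) [] (i + 1)) := rfl
      rw [this]
      exact (IsLocallyConstant.comp (F_locally_constant U A hU hA hne (i + 1)) _).continuous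
    · intro a
      exact fdef_gseq U A hU hA hne a.2 (by rw [sig_nil]; exact pre_nil _)
end

section
/- Let X be a topological space with a countable basis B : ℕ → Set X, and let f be a partial multivalued function from Cantor space to ℕ, i.e. f : (ℕ → Bool) → Set ℕ with domain dom f = {p | f p ≠ ∅}. Suppose f is topologically Weihrauch reducible to overt choice for X: there exist a continuous K mapping each p ∈ dom f (Cantor space as a subspace) to a name of some nonempty closed set A_p ⊆ X, and a continuous partial function H into the discrete space ℕ such that H (p, q) ∈ f p whenever p ∈ dom f and q is a name of some point of A_p. Then f has a continuous realizer: there is a continuous F : dom f → ℕ (dom f with the subspace topology of Cantor space, ℕ discrete) with F p ∈ f p for all p ∈ dom f. -/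
open Filter Topology Set

/-- `B : ℕ → Set X` is a countable basis: each `B n` is open and every open set is a
union of sets `B n`. -/
def IsCountableBasis {X : Type*} [TopologicalSpace X] (B : ℕ → Set X) : Prop :=
  (∀ n, IsOpen (B n)) ∧ ∀ U : Set X, IsOpen U → ∃ S : Set ℕ, U = ⋃ n ∈ S, B n

/-- A name of a point `x` is an enumeration of `{n | x ∈ B n}`. -/
def PointName {X : Type*} (B : ℕ → Set X) (x : X) (p : ℕ → ℕ) : Prop :=
  Enumerates p {n | x ∈ B n}

/-- A name of a closed set `A` is an enumeration of `{n | B n ∩ A ≠ ∅}`. -/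
def ClosedName {X : Type*} (B : ℕ → Set X) (A : Set X) (p : ℕ → ℕ) : Prop :=
  Enumerates p {n | (B n ∩ A).Nonempty}

lemma exists_cylinder_subset {E : ℕ → Type*} [∀ i, TopologicalSpace (E i)]
    [∀ i, DiscreteTopology (E i)] {x : ∀ i, E i} {U : Set (∀ i, E i)} (h : U ∈ 𝓝 x) :
    ∃ M, ∀ y : ∀ i, E i, (∀ i < M, y i = x i) → y ∈ U := by
  rw [nhds_pi] at h
  obtain ⟨I, hI, t, ht, hsub⟩ := Filter.mem_pi.mp h
  obtain ⟨M, hM⟩ := hI.bddAbove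
  refine ⟨M + 1, fun y hy => hsub ?_⟩
  intro i hiI
  have h1 : y i = x i := hy i (Nat.lt_succ_of_le (hM hiI))
  have h2 := ht i
  rw [nhds_discrete] at h2
  rw [h1]
  exact h2

/-- If a partial multivalued function `f` from Cantor space to `ℕ` is topologically
Weihrauch reducible to overt choice for a countably-based space `X`, then `f` has a
continuous realizer. -/
theorem continuous_realizer_of_reducible_to_overt_choice
    {X : Type*} [TopologicalSpace X] (B : ℕ → Set X) (hB : IsCountableBasis B)
    (f : (ℕ → Bool) → Set ℕ)
    (hred : ∃ (K : (ℕ → Bool) → (ℕ → ℕ)) (Aset : (ℕ → Bool) → Set X)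
        (H : (ℕ → Bool) × (ℕ → ℕ) → ℕ),
      ContinuousOn K {p | (f p).Nonempty} ∧
      (∀ p, (f p).Nonempty →
        (Aset p).Nonempty ∧ IsClosed (Aset p) ∧ ClosedName B (Aset p) (K p)) ∧
      ContinuousOn H {pq : (ℕ → Bool) × (ℕ → ℕ) |
        (f pq.1).Nonempty ∧ ∃ x ∈ Aset pq.1, PointName B x pq.2} ∧
      (∀ p, (f p).Nonempty → ∀ q x, x ∈ Aset p → PointName B x q → H (p, q) ∈ f p)) :
    ∃ F : (ℕ → Bool) → ℕ, ContinuousOn F {p | (f p).Nonempty} ∧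
      ∀ p, (f p).Nonempty → F p ∈ f p := by
  classical
  obtain ⟨K, Aset, H, hK, hA, hH, hcorr⟩ := hred
  set D : Set (ℕ → Bool) := {p | (f p).Nonempty} with hD
  set S : Set ((ℕ → Bool) × (ℕ → ℕ)) :=
    {pq | (f pq.1).Nonempty ∧ ∃ x ∈ Aset pq.1, PointName B x pq.2} with hS
  -- Key local lemma
  have key : ∀ p₀ ∈ D, ∃ M n, ∀ p ∈ D, (∀ i < M, p i = p₀ i) → n ∈ f p := by
    intro p₀ hp₀
    obtain ⟨hAne, -, hAname⟩ := hA p₀ hp₀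
    obtain ⟨x₀, hx₀⟩ := hAne
    set q₀ : ℕ → ℕ := fun k => if x₀ ∈ B k then k + 1 else 0 with hq₀
    have hq₀name : PointName B x₀ q₀ := by
      unfold PointName Enumerates
      ext m
      simp only [Set.mem_setOf_eq, hq₀]
      constructor
      · intro hm; exact ⟨m, by simp [hm]⟩
      · rintro ⟨k, hk⟩
        by_cases hxk : x₀ ∈ B k
        · simp only [hxk, if_true] at hk
          have : k = m := by omega
          subst this; exact hxk
        · simp [hxk] at hk
    have hPQ : (p₀, q₀) ∈ S := ⟨hp₀, x₀, hx₀, hq₀name⟩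
    have hcw : ContinuousWithinAt H S (p₀, q₀) := hH _ hPQ
    have hmem : H ⁻¹' {H (p₀, q₀)} ∈ 𝓝[S] (p₀, q₀) :=
      hcw ((isOpen_discrete _).mem_nhds rfl)
    obtain ⟨O, hOopen, hOmem, hOsub⟩ := mem_nhdsWithin.mp hmem
    have hOn : O ∈ 𝓝 (p₀, q₀) := hOopen.mem_nhds hOmem
    rw [nhds_prod_eq] at hOn
    obtain ⟨U, hU, V, hV, hUV⟩ := Filter.mem_prod_iff.mp hOn
    obtain ⟨MU, hMU⟩ := exists_cylinder_subset hU
    obtain ⟨MV, hMV⟩ := exists_cylinder_subset hV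
    set M₁ := max MU MV with hM₁
    set W : Set X := ⋂ k ∈ Finset.filter (fun k => x₀ ∈ B k) (Finset.range M₁), B k with hW
    have hWopen : IsOpen W := isOpen_biInter_finset fun k _ => hB.1 k
    have hx₀W : x₀ ∈ W := by
      rw [hW]
      refine Set.mem_iInter₂.mpr fun k hk => ?_
      exact (Finset.mem_filter.mp hk).2
    obtain ⟨Sj, hSj⟩ := hB.2 W hWopen
    have hx₀U : x₀ ∈ ⋃ n ∈ Sj, B n := hSj ▸ hx₀W
    obtain ⟨j, hjS, hxj⟩ := Set.mem_iUnion₂.mp hx₀U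
    have hBjW : B j ⊆ W := by
      rw [hSj]; exact Set.subset_biUnion_of_mem hjS
    have hjmem : j ∈ {n | (B n ∩ Aset p₀).Nonempty} := ⟨x₀, hxj, hx₀⟩
    rw [hAname] at hjmem
    obtain ⟨k₀, hk₀⟩ := hjmem
    have hKk : ContinuousWithinAt (fun p => K p k₀) D p₀ :=
      ((continuous_apply k₀).comp_continuousOn hK) p₀ hp₀
    have hmem2 : (fun p => K p k₀) ⁻¹' {j + 1} ∈ 𝓝[D] p₀ := by
      apply hKk
      show {j + 1} ∈ 𝓝 (K p₀ k₀)
      rw [hk₀]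
      exact (isOpen_discrete _).mem_nhds rfl
    obtain ⟨O₂, hO₂open, hO₂mem, hO₂sub⟩ := mem_nhdsWithin.mp hmem2
    obtain ⟨M₂, hM₂⟩ := exists_cylinder_subset (hO₂open.mem_nhds hO₂mem)
    refine ⟨max M₁ M₂, H (p₀, q₀), fun p hp hagree => ?_⟩
    have hKpk₀ : K p k₀ = j + 1 :=
      hO₂sub ⟨hM₂ p (fun i hi => hagree i (lt_of_lt_of_le hi (le_max_right _ _))), hp⟩
    obtain ⟨-, -, hnamep⟩ := hA p hp
    have hjp : j ∈ {n | (B n ∩ Aset p).Nonempty} := by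
      rw [hnamep]; exact ⟨k₀, hKpk₀⟩
    obtain ⟨x, hxBj, hxA⟩ := hjp
    have hxW : x ∈ W := hBjW hxBj
    set q : ℕ → ℕ := fun k =>
      if k < M₁ then q₀ k else (if x ∈ B (k - M₁) then (k - M₁) + 1 else 0) with hq
    have hqname : PointName B x q := by
      unfold PointName Enumerates
      ext m
      simp only [Set.mem_setOf_eq]
      constructor
      · intro hm
        refine ⟨m + M₁, ?_⟩
        have h1 : ¬ (m + M₁ < M₁) := by omega
        simp [hq, h1, hm]
      · rintro ⟨k, hk⟩
        simp only [hq] at hk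
        by_cases hkM : k < M₁
        · simp only [hkM, if_true, hq₀] at hk
          by_cases hxk : x₀ ∈ B k
          · simp only [hxk, if_true] at hk
            have hkm : k = m := by omega
            subst hkm
            have hmemf : k ∈ Finset.filter (fun k => x₀ ∈ B k) (Finset.range M₁) :=
              Finset.mem_filter.mpr ⟨Finset.mem_range.mpr hkM, hxk⟩
            exact Set.mem_iInter₂.mp (hW ▸ hxW) k hmemf
          · simp [hxk] at hk
        · simp only [hkM, if_false] at hk
          by_cases hxk : x ∈ B (k - M₁)
          · simp only [hxk, if_true] at hk
            have : k - M₁ = m := by omega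
            rwa [this] at hxk
          · simp [hxk] at hk
    have hpqS : (p, q) ∈ S := ⟨hp, x, hxA, hqname⟩
    have hpqO : (p, q) ∈ O := by
      apply hUV
      constructor
      · exact hMU p (fun i hi => hagree i (lt_of_lt_of_le hi
          (le_trans (le_max_left MU MV) (le_max_left M₁ M₂))))
      · refine hMV q (fun i hi => ?_)
        have hiM₁ : i < M₁ := lt_of_lt_of_le hi (le_max_right MU MV)
        simp [hq, hiM₁]
    have hval : H (p, q) = H (p₀, q₀) := hOsub ⟨hpqO, hpqS⟩
    have hfin := hcorr p hp q x hxA hqname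
    rwa [hval] at hfin
  -- Gluing
  set trunc : ℕ → (ℕ → Bool) → (ℕ → Bool) := fun M p i => if i < M then p i else false
    with htrunc
  set Good : ℕ → (ℕ → Bool) → Prop :=
    fun M σ => ∃ n, ∀ p ∈ D, (∀ i < M, p i = σ i) → n ∈ f p with hGood
  have htruncEq : ∀ (M : ℕ) (p p' : ℕ → Bool), (∀ i < M, p' i = p i) →
      trunc M p' = trunc M p := by
    intro M p p' h
    funext i
    simp only [htrunc]
    split_ifs with hi
    · exact h i hi
    · rfl
  have htrunc_agree : ∀ (M : ℕ) (p : ℕ → Bool) (i : ℕ), i < M → trunc M p i = p i := by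
    intro M p i hi; simp [htrunc, hi]
  have hGoodEx : ∀ p ∈ D, ∃ M, Good M (trunc M p) := by
    intro p hp
    obtain ⟨M, n, hMn⟩ := key p hp
    refine ⟨M, n, fun p' hp' hag => ?_⟩
    refine hMn p' hp' fun i hi => ?_
    rw [hag i hi, htrunc_agree M p i hi]
  set val : ℕ → (ℕ → Bool) → ℕ := fun M σ => if h : Good M σ then h.choose else 0 with hvaldef
  set F : (ℕ → Bool) → ℕ :=
    fun p => if h : ∃ M, Good M (trunc M p) then val (Nat.find h) (trunc (Nat.find h) p)
      else 0 with hF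
  have hFval : ∀ p (h : ∃ M, Good M (trunc M p)),
      F p = val (Nat.find h) (trunc (Nat.find h) p) := by
    intro p h; simp only [hF, dif_pos h]
  have hFin : ∀ p, p ∈ D → F p ∈ f p := by
    intro p hp
    have h := hGoodEx p hp
    rw [hFval p h]
    have hg : Good (Nat.find h) (trunc (Nat.find h) p) := Nat.find_spec h
    rw [hvaldef]
    simp only [dif_pos hg]
    exact hg.choose_spec p hp (fun i hi => (htrunc_agree _ p i hi).symm)
  refine ⟨F, ?_, fun p hp => hFin p hp⟩
  intro p hp
  have h := hGoodEx p hp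
  set L := Nat.find h with hL
  have hCopen : IsOpen {p' : ℕ → Bool | ∀ i < L, p' i = p i} := by
    have heq : {p' : ℕ → Bool | ∀ i < L, p' i = p i} =
        ⋂ i ∈ Finset.range L, {p' : ℕ → Bool | p' i = p i} := by
      ext p'; simp [Finset.mem_range]
    rw [heq]
    refine isOpen_biInter_finset fun i _ => ?_
    show IsOpen ((fun p' : ℕ → Bool => p' i) ⁻¹' {p i})
    exact (isOpen_discrete {p i}).preimage (continuous_apply i)
  have hev : {p' | F p' = F p} ∈ 𝓝[D] p := by
    refine mem_nhdsWithin.mpr ⟨_, hCopen, fun i _ => rfl, ?_⟩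
    rintro p' ⟨hp'C, hp'D⟩
    have h' := hGoodEx p' hp'D
    have hfind : Nat.find h' = L := by
      rw [Nat.find_eq_iff]
      constructor
      · rw [htruncEq L p p' (fun i hi => hp'C i hi)]
        exact Nat.find_spec h
      · intro m hm
        rw [htruncEq m p p' (fun i hi => hp'C i (lt_of_lt_of_le hi (le_of_lt hm)))]
        exact Nat.find_min h hm
    show F p' = F p
    rw [hFval p' h', hFval p h, hfind, ← hL,
      htruncEq L p p' (fun i hi => hp'C i hi)]
  exact (continuousWithinAt_const (b := F p)).congr_of_eventuallyEq hev rfl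
end

section
/- Let (Y, δ) be a represented space, i.e. Y is a set and δ is a partial surjection from Baire space onto Y. Let f be a partial multivalued function from subsets of ℕ to Y (f : Set ℕ → Set Y, with U ∈ dom f iff f U ≠ ∅), where a name of the input U ⊆ ℕ is any p : ℕ → ℕ enumerating U. Assume ℕ ∈ dom f and that f is nowhere continuous: for every finite set A ⊆ ℕ there is no continuous function G, defined on {p | p enumerates some U ∈ dom f with A ⊆ U}, such that G p is a δ-name of an element of f U whenever p enumerates U. Then f is not topologically Weihrauch reducible to C_ℕ: there do not exist continuous functions K and H such that for every p enumerating some U ∈ dom f, K p enumerates ℕ ∖ S for some nonempty S ⊆ ℕ, and H (p, n) is a δ-name of an element of f U for every n ∈ S. -/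
/-- Prepend a finite list to a point of Baire space. -/
def appList (σ : List ℕ) (p : ℕ → ℕ) : ℕ → ℕ :=
  fun j => if j < σ.length then σ.getD j 0 else p (j - σ.length)

/-- The finite set of numbers enumerated by a finite list. -/
def predFinset (σ : List ℕ) : Finset ℕ :=
  (σ.filterMap fun m => if m = 0 then none else some (m - 1)).toFinset

lemma mem_predFinset {σ : List ℕ} {n : ℕ} : n ∈ predFinset σ ↔ n + 1 ∈ σ := by
  simp only [predFinset, List.mem_toFinset, List.mem_filterMap]
  constructor
  · rintro ⟨m, hm, hm2⟩
    split at hm2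
    · exact absurd hm2 (by simp)
    · rename_i h0
      have : m - 1 = n := by simpa using hm2
      have : m = n + 1 := by omega
      exact this ▸ hm
  · intro h
    exact ⟨n + 1, h, by simp⟩

lemma continuous_appList (σ : List ℕ) : Continuous fun p : ℕ → ℕ => appList σ p := by
  refine continuous_pi fun j => ?_
  by_cases h : j < σ.length
  · simpa [appList, h] using (continuous_const : Continuous fun _ : ℕ → ℕ => σ.getD j 0)
  · simpa [appList, h] using continuous_apply (j - σ.length)

lemma appList_enumerates {σ : List ℕ} {p : ℕ → ℕ} {U : Set ℕ}
    (hAU : (↑(predFinset σ) : Set ℕ) ⊆ U) (hpU : Enumerates p U) :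
    Enumerates (appList σ p) U := by
  have hpU' : U = {n | ∃ k, p k = n + 1} := hpU
  show U = {n | ∃ k, appList σ p k = n + 1}
  ext n
  constructor
  · intro hn
    obtain ⟨k, hk⟩ : ∃ k, p k = n + 1 := by rw [hpU'] at hn; exact hn
    refine ⟨k + σ.length, ?_⟩
    have h : ¬ (k + σ.length < σ.length) := by omega
    simp only [appList, if_neg h, Nat.add_sub_cancel]
    exact hk
  · rintro ⟨k, hk⟩
    by_cases h : k < σ.length
    · have hσ : σ.getD k 0 = n + 1 := by
        simpa only [appList, if_pos h] using hk
      have hnA : n ∈ predFinset σ := mem_predFinset.mpr (by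
        rw [← hσ, List.getD_eq_getElem σ 0 h]; exact List.getElem_mem h)
      exact hAU hnA
    · have : appList σ p k = p (k - σ.length) := by simp only [appList, if_neg h]
      rw [this] at hk
      rw [hpU']
      exact ⟨k - σ.length, hk⟩

lemma getD_of_prefix {l₁ l₂ : List ℕ} (h : l₁ <+: l₂) {j : ℕ} (hj : j < l₁.length) :
    l₂.getD j 0 = l₁.getD j 0 := by
  obtain ⟨t, rfl⟩ := h
  simp [List.getD, List.getElem?_append_left hj]

lemma prefix_ofFn {n : ℕ} (l : List ℕ) (g : Fin n → ℕ) (h5 : l.length ≤ n)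
    (hg : ∀ j (hj : j < l.length), g ⟨j, by omega⟩ = l.getD j 0) : l <+: List.ofFn g := by
  rw [List.prefix_iff_eq_take]
  apply List.ext_getElem
  · simp [h5]
  · intro i h1 h2
    have := hg i h1
    rw [List.getD_eq_getElem l 0 h1] at this
    simp [← this]

/-- Let `(Y, δ)` be a represented space (`δ` a partial surjection from Baire space onto `Y`,
modelled as an `Option`-valued map) and let `f` be a partial multivalued function from
`Set ℕ` (inputs given by enumeration) to `Y` with `Set.univ ∈ dom f`.  If `f` is
nowhere continuous, then `f` is not topologically Weihrauch reducible to `C_ℕ`. -/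
theorem not_reducible_to_CNat_of_nowhere_continuous
    {Y : Type*} (δ : (ℕ → ℕ) → Option Y) (hδ : ∀ y : Y, ∃ q, δ q = some y)
    (f : Set ℕ → Set Y)
    (hdom : (f Set.univ).Nonempty)
    (hnc : ∀ A : Finset ℕ,
      ¬ ∃ G : (ℕ → ℕ) → (ℕ → ℕ),
        ContinuousOn G {p | ∃ U : Set ℕ, (f U).Nonempty ∧ ↑A ⊆ U ∧ Enumerates p U} ∧
        ∀ (p : ℕ → ℕ) (U : Set ℕ), (f U).Nonempty → ↑A ⊆ U → Enumerates p U →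
          ∃ y ∈ f U, δ (G p) = some y) :
    ¬ ∃ (K : (ℕ → ℕ) → (ℕ → ℕ)) (S : (ℕ → ℕ) → Set ℕ) (H : (ℕ → ℕ) × ℕ → (ℕ → ℕ)),
      ContinuousOn K {p | ∃ U : Set ℕ, (f U).Nonempty ∧ Enumerates p U} ∧
      ContinuousOn H {q : (ℕ → ℕ) × ℕ |
        (∃ U : Set ℕ, (f U).Nonempty ∧ Enumerates q.1 U) ∧ q.2 ∈ S q.1} ∧
      ∀ (p : ℕ → ℕ) (U : Set ℕ), (f U).Nonempty → Enumerates p U →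
        (S p).Nonempty ∧ Enumerates (K p) (S p)ᶜ ∧
          ∀ n ∈ S p, ∃ y ∈ f U, δ (H (p, n)) = some y := by
  rintro ⟨K, S, H, hK, hH, hred⟩
  set D : Set (ℕ → ℕ) := {p | ∃ U : Set ℕ, (f U).Nonempty ∧ Enumerates p U} with hD
  -- Stage lemma: given any finite prefix, we can extend it so that any point of `D`
  -- extending the new prefix has `i + 1` in the output of `K` (at a fixed position).
  have key : ∀ (i : ℕ) (σ : List ℕ), ∃ (τ : List ℕ) (k : ℕ),
      σ <+: τ ∧ σ.length < τ.length ∧ (∃ j < τ.length, τ.getD j 0 = i + 1) ∧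
      ∀ p ∈ D, (∀ j < τ.length, p j = τ.getD j 0) → K p k = i + 1 := by
    intro i σ
    -- Step 1: there is q ∈ D extending σ with i + 1 in the range of K q.
    have step1 : ∃ q ∈ D, (∀ j < σ.length, q j = σ.getD j 0) ∧ ∃ k, K q k = i + 1 := by
      by_contra hcon
      push_neg at hcon
      set A : Finset ℕ := predFinset σ with hA
      have hiS : ∀ (p : ℕ → ℕ) (U : Set ℕ), (f U).Nonempty → ↑A ⊆ U → Enumerates p U →
          i ∈ S (appList σ p) := by
        intro p U hU hAU hpU
        have henum := appList_enumerates (σ := σ) (p := p) hAU hpU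
        have hq : appList σ p ∈ D := ⟨U, hU, henum⟩
        have hext : ∀ j < σ.length, appList σ p j = σ.getD j 0 := by
          intro j hj; simp only [appList, if_pos hj]
        have hne := hcon (appList σ p) hq hext
        obtain ⟨-, hKen, -⟩ := hred (appList σ p) U hU henum
        have hKen' : (S (appList σ p))ᶜ = {n | ∃ k, K (appList σ p) k = n + 1} := hKen
        by_contra hi
        have : i ∈ (S (appList σ p))ᶜ := hi
        rw [hKen'] at this
        obtain ⟨k, hk⟩ := this
        exact hne k hk
      refine hnc A ⟨fun p => H (appList σ p, i), ?_, ?_⟩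
      · have hcont : Continuous fun p : ℕ → ℕ => (appList σ p, i) :=
          (continuous_appList σ).prodMk continuous_const
        refine hH.comp hcont.continuousOn ?_
        rintro p ⟨U, hU, hAU, hpU⟩
        exact ⟨⟨U, hU, appList_enumerates hAU hpU⟩, hiS p U hU hAU hpU⟩
      · intro p U hU hAU hpU
        obtain ⟨-, -, hsol⟩ := hred (appList σ p) U hU (appList_enumerates hAU hpU)
        exact hsol i (hiS p U hU hAU hpU)
    obtain ⟨q, hqD, hqext, k, hk⟩ := step1
    -- Step 2: by continuity of K, a finite prefix of q forces K p k = i + 1 on D.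
    have hcw : ContinuousWithinAt (fun p => K p k) D q :=
      (continuous_apply k).continuousAt.comp_continuousWithinAt (hK q hqD)
    have hmem : (fun p => K p k) ⁻¹' {i + 1} ∈ nhdsWithin q D :=
      hcw ((isOpen_discrete ({i + 1} : Set ℕ)).mem_nhds (by simp [hk]))
    rw [mem_nhdsWithin] at hmem
    obtain ⟨u, huo, hqu, husub⟩ := hmem
    obtain ⟨I, w, hw, hwsub⟩ := isOpen_pi_iff.mp huo q hqu
    set L : ℕ := max (I.sup id + 1) σ.length with hLdef
    have hσL : σ.length ≤ L := le_max_right _ _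
    set τ : List ℕ := List.ofFn (fun j : Fin L => q j) ++ [i + 1] with hτ
    have hτlen : τ.length = L + 1 := by simp [hτ]
    have hτget : ∀ j < L, τ.getD j 0 = q j := by
      intro j hj
      show ((List.ofFn fun j : Fin L => q j) ++ [i + 1]).getD j 0 = q j
      rw [List.getD_eq_getElem _ 0 (by simp; omega)]
      rw [List.getElem_append_left (by simpa using hj)]
      simp
    refine ⟨τ, k, ?_, ?_, ?_, ?_⟩
    · refine (prefix_ofFn σ (fun j : Fin L => q j) hσL ?_).trans (List.prefix_append _ _)
      intro j hj
      exact hqext j hj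
    · omega
    · refine ⟨L, by omega, ?_⟩
      show ((List.ofFn fun j : Fin L => q j) ++ [i + 1]).getD L 0 = i + 1
      rw [List.getD_eq_getElem _ 0 (by simp)]
      rw [List.getElem_append_right (by simp)]
      simp
    · intro p hpD hpτ
      have hagree : ∀ j < L, p j = q j := by
        intro j hj
        rw [hpτ j (by omega), hτget j hj]
      have hpu : p ∈ u := by
        apply hwsub
        intro a ha
        have haL : a < L := by
          have := Finset.le_sup (f := id) ha
          simp only [id] at this
          omega
        rw [hagree a haL]
        exact (hw a ha).2
      exact husub ⟨hpu, hpD⟩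
  choose τf kf hpre hlen hmemb hforce using key
  -- Build the increasing sequence of prefixes and the diagonal point.
  set Sig : ℕ → List ℕ := fun n => Nat.rec [] (fun i s => τf i s) n with hSigdef
  have hSig : ∀ i, Sig (i + 1) = τf i (Sig i) := fun i => rfl
  have hSigpre : ∀ i, Sig i <+: Sig (i + 1) := by
    intro i; rw [hSig i]; exact hpre i (Sig i)
  have hSigmono : ∀ i j, i ≤ j → Sig i <+: Sig j := by
    intro i j hij
    induction j with
    | zero =>
      have : i = 0 := Nat.le_zero.mp hij
      subst this; exact List.prefix_refl _
    | succ j ih =>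
      rcases Nat.lt_or_ge i (j + 1) with h | h
      · exact (ih (Nat.lt_succ_iff.mp h)).trans (hSigpre j)
      · have : i = j + 1 := le_antisymm hij h
        subst this; exact List.prefix_refl _
  have hSigen : ∀ i, i ≤ (Sig i).length := by
    intro i
    induction i with
    | zero => simp
    | succ i ih =>
      have h1 := hlen i (Sig i)
      rw [hSig i]
      omega
  set pstar : ℕ → ℕ := fun j => (Sig (j + 1)).getD j 0 with hps
  have hagree : ∀ i j, j < (Sig i).length → pstar j = (Sig i).getD j 0 := by
    intro i j hj
    rcases Nat.le_total i (j + 1) with h | h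
    · exact getD_of_prefix (hSigmono i (j + 1) h) hj
    · have hj' : j < (Sig (j + 1)).length := by have := hSigen (j + 1); omega
      exact (getD_of_prefix (hSigmono (j + 1) i h) hj').symm
  have hpuniv : Enumerates pstar Set.univ := by
    show Set.univ = {n | ∃ k, pstar k = n + 1}
    ext n
    simp only [Set.mem_univ, Set.mem_setOf_eq, true_iff]
    have hm := hmemb n (Sig n)
    rw [← hSig n] at hm
    obtain ⟨j, hj, hval⟩ := hm
    exact ⟨j, (hagree (n + 1) j hj).trans hval⟩
  have hpD : pstar ∈ D := ⟨Set.univ, hdom, hpuniv⟩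
  have hforced : ∀ i, K pstar (kf i (Sig i)) = i + 1 := by
    intro i
    apply hforce i (Sig i) pstar hpD
    intro j hj
    rw [← hSig i] at hj ⊢
    exact hagree (i + 1) j hj
  obtain ⟨hSne, hKen, -⟩ := hred pstar Set.univ hdom hpuniv
  obtain ⟨n, hn⟩ := hSne
  have hKen' : (S pstar)ᶜ = {n | ∃ k, K pstar k = n + 1} := hKen
  have : n ∈ (S pstar)ᶜ := by
    rw [hKen']
    exact ⟨kf n (Sig n), hforced n⟩
  exact this hn
end

section
/- There is no continuous function F, defined on the subspace of Baire space consisting of all p : ℕ → ℕ that enumerate (via the fixed encoding of binary words) some nonempty tree T ⊆ List Bool having eventually constant paths everywhere, with values in Cantor space ℕ → Bool, such that whenever p enumerates such a tree T, F p is an eventually constant path of T. (In particular, the problem ECP is not computable.) -/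
def EnumeratesTree (code : List Bool → ℕ) (p : ℕ → ℕ) (T : Set (List Bool)) : Prop :=
  T = {w | ∃ k, p k = code w + 1}

def ECPTree (T : Set (List Bool)) : Prop :=
  T.Nonempty ∧ (∀ w ∈ T, ∀ u, u <+: w → u ∈ T) ∧
    ∀ w ∈ T, ∃ u ∈ T, w <+: u ∧ ∃ b : Bool, ∀ n : ℕ, u ++ List.replicate n b ∈ T

def ECPath (T : Set (List Bool)) (x : ℕ → Bool) : Prop :=
  (∀ n : ℕ, (List.ofFn fun i : Fin n => x i) ∈ T) ∧ ∃ N : ℕ, ∃ b : Bool, ∀ k, N ≤ k → x k = b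

namespace ECPnc

/-- the prefix of length `n` of an infinite sequence. -/
def pref (x : ℕ → Bool) : ℕ → List Bool
  | 0 => []
  | n + 1 => pref x n ++ [x n]

@[simp] lemma pref_length (x : ℕ → Bool) (n : ℕ) : (pref x n).length = n := by
  induction n with
  | zero => rfl
  | succ n ih => simp [pref, ih]

lemma pref_getElem (x : ℕ → Bool) {m n : ℕ} (h : m < n) {hm : m < (pref x n).length} :
    (pref x n)[m] = x m := by
  induction n with
  | zero => omega
  | succ n ih =>
    rcases Nat.lt_succ_iff_lt_or_eq.mp h with h' | h'
    · have hm' : m < (pref x n).length := by simpa using h'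
      show (pref x n ++ [x n])[m]'(by simpa using h) = x m
      rw [List.getElem_append_left hm']
      exact ih h'
    · subst h'
      show (pref x m ++ [x m])[m]'(by simp) = x m
      rw [List.getElem_append_right (by simp)]
      simp

lemma pref_eq_iff {x y : ℕ → Bool} {n : ℕ} :
    pref x n = pref y n ↔ ∀ m < n, x m = y m := by
  constructor
  · intro h m hm
    have hmx : m < (pref x n).length := by simpa using hm
    have hmy : m < (pref y n).length := by simpa using hm
    calc x m = (pref x n).getD m false := by
          rw [List.getD_eq_getElem?_getD, List.getElem?_eq_getElem hmx]
          exact (pref_getElem x hm).symm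
    _ = (pref y n).getD m false := by rw [h]
    _ = y m := by
          rw [List.getD_eq_getElem?_getD, List.getElem?_eq_getElem hmy]
          exact pref_getElem y hm
  · intro h
    induction n with
    | zero => rfl
    | succ n ih =>
      have := ih (fun m hm => h m (by omega))
      simp [pref, this, h n (by omega)]

lemma pref_take {x : ℕ → Bool} {m n : ℕ} (h : m ≤ n) : (pref x n).take m = pref x m := by
  induction n with
  | zero => simpa using (Nat.le_zero.mp h).symm ▸ rfl
  | succ n ih =>
    rcases Nat.lt_succ_iff_lt_or_eq.mp (Nat.lt_succ_of_le h) with h' | h'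
    · have hmn : m ≤ n := by omega
      rw [pref, List.take_append_of_le_length (by simpa using hmn), ih hmn]
    · subst h'
      rw [List.take_of_length_le (by simp)]

lemma pref_prefix {x : ℕ → Bool} {m n : ℕ} (h : m ≤ n) : pref x m <+: pref x n := by
  rw [← pref_take h]; exact List.take_prefix _ _

lemma prefix_pref {x : ℕ → Bool} {u : List Bool} {n : ℕ} (h : u <+: pref x n) :
    u = pref x u.length := by
  have hl : u.length ≤ n := by simpa using h.length_le
  have h2 : u = (pref x n).take u.length := List.prefix_iff_eq_take.mp h
  rw [pref_take hl] at h2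
  exact h2

lemma pref_eq_ofFn (x : ℕ → Bool) (n : ℕ) :
    pref x n = (List.ofFn fun i : Fin n => x i) := by
  apply List.ext_getElem (by simp)
  intro m hm₁ hm₂
  rw [pref_getElem x (by simpa using hm₁), List.getElem_ofFn]

end ECPnc
namespace ECPnc

/-- the infinite sequence following base `t.1` then constant `t.2`. -/
noncomputable def seqt (t : List Bool × Bool) : ℕ → Bool :=
  fun m => if h : m < t.1.length then t.1[m] else t.2

lemma seqt_lt {t : List Bool × Bool} {m : ℕ} (h : m < t.1.length) :
    seqt t m = t.1[m] := dif_pos h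

lemma seqt_ge {t : List Bool × Bool} {m : ℕ} (h : t.1.length ≤ m) :
    seqt t m = t.2 := dif_neg (by omega)

/-- the comb tree over a finite list of teeth. -/
def TW (W : List (List Bool × Bool)) : Set (List Bool) :=
  {v | ∃ t ∈ W, v = pref (seqt t) v.length}

lemma TW_mem_pref {W : List (List Bool × Bool)} {t : List Bool × Bool} (ht : t ∈ W) (n : ℕ) :
    pref (seqt t) n ∈ TW W := ⟨t, ht, by rw [pref_length]⟩

lemma TW_prefix_closed {W : List (List Bool × Bool)} {w u : List Bool}
    (hw : w ∈ TW W) (hu : u <+: w) : u ∈ TW W := by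
  obtain ⟨t, ht, hw'⟩ := hw
  rw [hw'] at hu
  exact ⟨t, ht, prefix_pref hu⟩

lemma TW_tail (t : List Bool × Bool) {a : ℕ} (ha : t.1.length ≤ a) (n : ℕ) :
    pref (seqt t) a ++ List.replicate n t.2 = pref (seqt t) (a + n) := by
  induction n with
  | zero => simp
  | succ n ih =>
    rw [List.replicate_succ' , ← List.append_assoc, ih]
    show _ = pref (seqt t) (a + n) ++ [seqt t (a+n)]
    rw [seqt_ge (by omega)]

lemma TW_ecptree {W : List (List Bool × Bool)} (hW : W ≠ []) : ECPTree (TW W) := by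
  obtain ⟨t₀, ht₀⟩ := List.exists_mem_of_ne_nil W hW
  refine ⟨⟨pref (seqt t₀) 0, TW_mem_pref ht₀ 0⟩, fun w hw u hu => TW_prefix_closed hw hu, ?_⟩
  rintro w ⟨t, ht, hw⟩
  refine ⟨pref (seqt t) (max w.length t.1.length), TW_mem_pref ht _, ?_, t.2, fun n => ?_⟩
  · conv_lhs => rw [hw]
    exact pref_prefix (by simp)
  · rw [TW_tail t (le_max_right _ _) n]
    exact TW_mem_pref ht _

lemma TW_path {W : List (List Bool × Bool)} {x : ℕ → Bool}
    (h : ∀ n, pref x n ∈ TW W) : ∃ t, t ∈ W ∧ x = seqt t := by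
  by_contra hc
  push_neg at hc
  have key : ∀ (L : List (List Bool × Bool)), (∀ t ∈ L, x ≠ seqt t) →
      ∃ N, ∀ t ∈ L, ∃ m < N, x m ≠ seqt t m := by
    intro L hL
    induction L with
    | nil => exact ⟨0, by simp⟩
    | cons a L ih =>
      obtain ⟨N, hN⟩ := ih (fun t ht => hL t (List.mem_cons_of_mem a ht))
      obtain ⟨m, hm⟩ := Function.ne_iff.mp (hL a List.mem_cons_self)
      refine ⟨max N (m+1), fun t ht => ?_⟩
      rcases List.mem_cons.mp ht with rfl | ht'
      · exact ⟨m, by omega, hm⟩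
      · obtain ⟨m', hm', hne⟩ := hN t ht'
        exact ⟨m', by omega, hne⟩
  obtain ⟨N, hN⟩ := key W (fun t ht hx => hc t ht (by rw [hx]))
  obtain ⟨t, ht, heq⟩ := h N
  rw [pref_length] at heq
  obtain ⟨m, hm, hne⟩ := hN t ht
  exact hne (pref_eq_iff.mp heq m hm)

lemma seqt_sep {t t' : List Bool × Bool} {M : ℕ} (h1 : t.1.length < M) (h2 : t'.1.length < M)
    (h : ∀ m < M, seqt t m = seqt t' m) : seqt t = seqt t' := by
  funext m
  by_cases hm : m < M
  · exact h m hm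
  · push_neg at hm
    have e1 : seqt t m = t.2 := seqt_ge (by omega)
    have e2 : seqt t' m = t'.2 := seqt_ge (by omega)
    have e3 : seqt t (M-1) = t.2 := seqt_ge (by omega)
    have e4 : seqt t' (M-1) = t'.2 := seqt_ge (by omega)
    rw [e1, e2, ← e3, ← e4]
    exact h (M-1) (by omega)

end ECPnc
namespace ECPnc

def Dom (code : List Bool → ℕ) : Set (ℕ → ℕ) :=
  {p | ∃ T, ECPTree T ∧ EnumeratesTree code p T}

structure Ctx where
  code : List Bool → ℕ
  hcode : Function.Injective code
  F : (ℕ → ℕ) → (ℕ → Bool)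
  hF : ContinuousOn F (Dom code)
  hcorr : ∀ (p : ℕ → ℕ) (T : Set (List Bool)), ECPTree T → EnumeratesTree code p T →
    ECPath T (F p)

lemma exists_modulus (C : Ctx) {p : ℕ → ℕ} (hp : p ∈ Dom C.code) (M : ℕ) :
    ∃ k, ∀ q ∈ Dom C.code, (∀ j < k, q j = p j) → ∀ m < M, C.F q m = C.F p m := by
  have hcw : ContinuousWithinAt C.F (Dom C.code) p := C.hF p hp
  set U : Set (ℕ → Bool) := Set.pi (↑(Finset.range M)) (fun m => {C.F p m}) with hU
  have hUo : IsOpen U := isOpen_set_pi (Finset.finite_toSet _) (fun i _ => isOpen_discrete _)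
  have hFU : C.F p ∈ U := fun m _ => rfl
  have hpre : C.F ⁻¹' U ∈ nhdsWithin p (Dom C.code) := hcw (hUo.mem_nhds hFU)
  rw [mem_nhdsWithin] at hpre
  obtain ⟨V, hVo, hpV, hVD⟩ := hpre
  obtain ⟨I, u, hu, hsub⟩ := isOpen_pi_iff.mp hVo p hpV
  refine ⟨(I.sup id) + 1, fun q hq hagree m hm => ?_⟩
  have hqV : q ∈ V := by
    apply hsub
    intro i hi
    have : q i = p i := hagree i (by
      have := Finset.le_sup (f := id) hi
      simp only [id] at this
      omega)
    rw [this]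
    exact (hu i hi).2
  have : C.F q ∈ U := hVD ⟨hqV, hq⟩
  have hmem : m ∈ (↑(Finset.range M) : Set ℕ) := by simp [hm]
  exact this m hmem

open Classical in
/-- enumeration helper. -/
noncomputable def emit (code : List Bool → ℕ) (T : Set (List Bool)) (j : ℕ) : ℕ :=
  if h : ∃ w : List Bool, Encodable.decode (Nat.unpair j).1 = some w ∧ w ∈ T ∧ w.length ≤ j
  then code h.choose + 1 else 0

lemma emit_spec₁ {code : List Bool → ℕ} {T : Set (List Bool)} {j n : ℕ}
    (h : emit code T j = n + 1) : ∃ w ∈ T, n = code w ∧ w.length ≤ j := by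
  unfold emit at h
  classical
  split at h
  · next hex =>
    obtain ⟨hd, hmem, hlen⟩ := hex.choose_spec
    exact ⟨hex.choose, hmem, by omega, hlen⟩
  · omega

lemma emit_spec₂ {code : List Bool → ℕ} {T : Set (List Bool)} {w : List Bool}
    (hw : w ∈ T) (t : ℕ) (hle : w.length ≤ Nat.pair (Encodable.encode w) t) :
    emit code T (Nat.pair (Encodable.encode w) t) = code w + 1 := by
  have hex : ∃ w' : List Bool,
      Encodable.decode (Nat.unpair (Nat.pair (Encodable.encode w) t)).1 = some w' ∧
      w' ∈ T ∧ w'.length ≤ Nat.pair (Encodable.encode w) t := by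
    refine ⟨w, ?_, hw, hle⟩
    rw [Nat.unpair_pair]
    exact Encodable.encodek w
  classical
  rw [emit, dif_pos hex]
  obtain ⟨hd, _, _⟩ := hex.choose_spec
  have h3 : (some hex.choose : Option (List Bool)) = some w := by
    rw [← hd, Nat.unpair_pair]
    exact Encodable.encodek w
  exact congrArg (fun z => code z + 1) (Option.some.inj h3)

structure Stg (C : Ctx) where
  W : List (List Bool × Bool)
  p : ℕ → ℕ
  k : ℕ
  M : ℕ
  hWne : W ≠ []
  hvals : ∀ j n, p j = n + 1 → ∃ w ∈ TW W, n = C.code w ∧ w.length ≤ j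
  hrev : ∀ w ∈ TW W, ∃ j, p j = C.code w + 1
  hM1 : ∀ t ∈ W, t.1.length + 2 ≤ M
  hMk : M < k
  hmod : ∀ q ∈ Dom C.code, (∀ j < k, q j = p j) → ∀ m < M, C.F q m = C.F p m

variable {C : Ctx}

lemma Stg.enum (s : Stg C) : EnumeratesTree C.code s.p (TW s.W) := by
  apply Set.ext
  intro w
  constructor
  · exact fun hw => s.hrev w hw
  · rintro ⟨k, hk⟩
    obtain ⟨w', hw', hcw, _⟩ := s.hvals k (C.code w) hk
    rwa [C.hcode hcw]

lemma Stg.mem_Dom (s : Stg C) : s.p ∈ Dom C.code :=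
  ⟨TW s.W, TW_ecptree s.hWne, s.enum⟩

lemma Stg.path (s : Stg C) : ∃ t, t ∈ s.W ∧ C.F s.p = seqt t := by
  apply TW_path
  intro n
  have := (C.hcorr s.p (TW s.W) (TW_ecptree s.hWne) s.enum).1 n
  rwa [← pref_eq_ofFn] at this

noncomputable def Stg.tooth (s : Stg C) : List Bool × Bool := s.path.choose

lemma Stg.tooth_mem (s : Stg C) : s.tooth ∈ s.W := s.path.choose_spec.1

lemma Stg.tooth_spec (s : Stg C) : C.F s.p = seqt s.tooth := s.path.choose_spec.2

end ECPnc
namespace ECPnc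

variable {C : Ctx}

lemma enum_of_valsrev {code : List Bool → ℕ} (hcode : Function.Injective code)
    {p : ℕ → ℕ} {T : Set (List Bool)}
    (hvals : ∀ j n, p j = n + 1 → ∃ w ∈ T, n = code w ∧ w.length ≤ j)
    (hrev : ∀ w ∈ T, ∃ j, p j = code w + 1) : EnumeratesTree code p T := by
  apply Set.ext
  intro w
  constructor
  · exact fun hw => hrev w hw
  · rintro ⟨k, hk⟩
    obtain ⟨w', hw', hcw, _⟩ := hvals k (code w) hk
    rwa [hcode hcw]

lemma seqt_pref_agree (x : ℕ → Bool) (c : Bool) {m K : ℕ} (h : m < K) :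
    seqt (pref x K, c) m = x m := by
  rw [seqt_lt (by simpa using h)]
  exact pref_getElem x h

lemma seqt_prefapp_agree (x : ℕ → Bool) (c d : Bool) {m K : ℕ} (h : m < K) :
    seqt (pref x K ++ [c], d) m = x m := by
  rw [seqt_lt (by simp; omega)]
  show (pref x K ++ [c])[m]'(by simp; omega) = x m
  rw [List.getElem_append_left (by simpa using h)]
  exact pref_getElem x h

lemma seqt_pref_tail (x : ℕ → Bool) (c : Bool) {m K : ℕ} (h : K ≤ m) :
    seqt (pref x K, c) m = c := seqt_ge (by simpa using h)

lemma seqt_prefapp_at (x : ℕ → Bool) (c d : Bool) (K : ℕ) :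
    seqt (pref x K ++ [c], d) K = c := by
  rw [seqt_lt (by simp)]
  show (pref x K ++ [c])[K]'(by simp) = c
  rw [List.getElem_append_right (by simp)]
  simp

lemma seqt_prefapp_tail (x : ℕ → Bool) (c d : Bool) {m K : ℕ} (h : K + 1 ≤ m) :
    seqt (pref x K ++ [c], d) m = d := seqt_ge (by simp; omega)

open Classical in
noncomputable def nW (C : Ctx) (s : Stg C) : List (List Bool × Bool) :=
  (pref (C.F s.p) s.k, !s.tooth.2) ::
  (pref (C.F s.p) s.k ++ [!s.tooth.2], s.tooth.2) ::
  s.W.filter (fun t => decide (seqt t ≠ C.F s.p))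

lemma nW_ne (C : Ctx) (s : Stg C) : nW C s ≠ [] := by simp [nW]

lemma nW_memA (s : Stg C) : (pref (C.F s.p) s.k, !s.tooth.2) ∈ nW C s := by
  simp [nW]

lemma nW_memB (s : Stg C) : (pref (C.F s.p) s.k ++ [!s.tooth.2], s.tooth.2) ∈ nW C s := by
  simp [nW]

lemma nW_mem_old (s : Stg C) {t : List Bool × Bool} (ht : t ∈ s.W)
    (hne : seqt t ≠ C.F s.p) : t ∈ nW C s := by
  classical
  simp only [nW, List.mem_cons]
  right; right
  rw [List.mem_filter]
  exact ⟨ht, by simpa using hne⟩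

lemma nW_elim (s : Stg C) {t : List Bool × Bool} (ht : t ∈ nW C s) :
    t = (pref (C.F s.p) s.k, !s.tooth.2) ∨
    t = (pref (C.F s.p) s.k ++ [!s.tooth.2], s.tooth.2) ∨
    (t ∈ s.W ∧ seqt t ≠ C.F s.p) := by
  classical
  simp only [nW, List.mem_cons] at ht
  rcases ht with h | h | h
  · exact Or.inl h
  · exact Or.inr (Or.inl h)
  · rw [List.mem_filter] at h
    exact Or.inr (Or.inr ⟨h.1, by simpa using h.2⟩)

lemma persist_step (s : Stg C) {w : List Bool} (hw : w ∈ TW s.W) (hl : w.length ≤ s.k) :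
    w ∈ TW (nW C s) := by
  obtain ⟨t, ht, hw'⟩ := hw
  by_cases hx : seqt t = C.F s.p
  · refine ⟨(pref (C.F s.p) s.k, !s.tooth.2), nW_memA s, ?_⟩
    rw [hw']
    rw [pref_length]
    apply pref_eq_iff.mpr
    intro m hm
    rw [hx, seqt_pref_agree _ _ (by omega)]
  · exact ⟨t, nW_mem_old s ht hx, hw'⟩

noncomputable def nP (C : Ctx) (s : Stg C) : ℕ → ℕ :=
  fun j => if j < s.k then s.p j else emit C.code (TW (nW C s)) j

lemma nP_lt (s : Stg C) {j : ℕ} (h : j < s.k) : nP C s j = s.p j := if_pos h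

lemma nP_ge (s : Stg C) {j : ℕ} (h : ¬ j < s.k) :
    nP C s j = emit C.code (TW (nW C s)) j := if_neg h

lemma nP_vals (s : Stg C) : ∀ j n, nP C s j = n + 1 →
    ∃ w ∈ TW (nW C s), n = C.code w ∧ w.length ≤ j := by
  intro j n hj
  by_cases h : j < s.k
  · rw [nP_lt s h] at hj
    obtain ⟨w, hw, hcw, hlw⟩ := s.hvals j n hj
    exact ⟨w, persist_step s hw (by omega), hcw, hlw⟩
  · rw [nP_ge s h] at hj
    exact emit_spec₁ hj

lemma nP_rev (s : Stg C) : ∀ w ∈ TW (nW C s), ∃ j, nP C s j = C.code w + 1 := by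
  intro w hw
  set t := max s.k w.length with hts
  refine ⟨Nat.pair (Encodable.encode w) t, ?_⟩
  have h1 : t ≤ Nat.pair (Encodable.encode w) t := Nat.right_le_pair _ _
  rw [nP_ge s (by omega)]
  exact emit_spec₂ hw t (by omega)

lemma nP_enum (s : Stg C) : EnumeratesTree C.code (nP C s) (TW (nW C s)) :=
  enum_of_valsrev C.hcode (nP_vals s) (nP_rev s)

lemma nP_mem_Dom (s : Stg C) : nP C s ∈ Dom C.code :=
  ⟨TW (nW C s), TW_ecptree (nW_ne C s), nP_enum s⟩

noncomputable def nK (C : Ctx) (s : Stg C) : ℕ :=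
  max (exists_modulus C (nP_mem_Dom s) (s.k + 3)).choose
    (max (s.k * s.k + s.k + 1) (s.k + 4))

lemma nK_ge₁ (s : Stg C) : s.k * s.k + s.k + 1 ≤ nK C s :=
  le_trans (le_max_left _ _) (le_max_right _ _)

lemma nK_ge₂ (s : Stg C) : s.k + 4 ≤ nK C s :=
  le_trans (le_max_right _ _) (le_max_right _ _)

lemma nK_mod (s : Stg C) : ∀ q ∈ Dom C.code, (∀ j < nK C s, q j = nP C s j) →
    ∀ m < s.k + 3, C.F q m = C.F (nP C s) m := by
  intro q hq ha
  exact (exists_modulus C (nP_mem_Dom s) (s.k + 3)).choose_spec q hq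
    (fun j hj => ha j (lt_of_lt_of_le hj (le_max_left _ _)))

noncomputable def nextStg (C : Ctx) (s : Stg C) : Stg C where
  W := nW C s
  p := nP C s
  k := nK C s
  M := s.k + 3
  hWne := nW_ne C s
  hvals := nP_vals s
  hrev := nP_rev s
  hM1 := by
    intro t ht
    rcases nW_elim s ht with rfl | rfl | ⟨ht', _⟩
    · simp
    · simp
    · have := s.hM1 t ht'
      have := s.hMk
      omega
  hMk := by have := nK_ge₂ s; omega
  hmod := nK_mod s

def W0 : List (List Bool × Bool) := [([], false)]

noncomputable def p0 (C : Ctx) : ℕ → ℕ := fun j => emit C.code (TW W0) j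

lemma p0_vals (C : Ctx) : ∀ j n, p0 C j = n + 1 →
    ∃ w ∈ TW W0, n = C.code w ∧ w.length ≤ j := fun _ _ h => emit_spec₁ h

lemma p0_rev (C : Ctx) : ∀ w ∈ TW W0, ∃ j, p0 C j = C.code w + 1 := by
  intro w hw
  refine ⟨Nat.pair (Encodable.encode w) w.length, ?_⟩
  exact emit_spec₂ hw w.length (Nat.right_le_pair _ _)

lemma p0_mem_Dom (C : Ctx) : p0 C ∈ Dom C.code :=
  ⟨TW W0, TW_ecptree (by simp [W0]), enum_of_valsrev C.hcode (p0_vals C) (p0_rev C)⟩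

noncomputable def stg0 (C : Ctx) : Stg C where
  W := W0
  p := p0 C
  k := max (exists_modulus C (p0_mem_Dom C) 3).choose 4
  M := 3
  hWne := by simp [W0]
  hvals := p0_vals C
  hrev := p0_rev C
  hM1 := by intro t ht; simp [W0] at ht; subst ht; simp
  hMk := by have : (4:ℕ) ≤ max (exists_modulus C (p0_mem_Dom C) 3).choose 4 := le_max_right _ _; omega
  hmod := by
    intro q hq ha
    exact (exists_modulus C (p0_mem_Dom C) 3).choose_spec q hq
      (fun j hj => ha j (lt_of_lt_of_le hj (le_max_left _ _)))

noncomputable def stgs (C : Ctx) : ℕ → Stg C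
  | 0 => stg0 C
  | n + 1 => nextStg C (stgs C n)

lemma stgs_succ (C : Ctx) (n : ℕ) : stgs C (n + 1) = nextStg C (stgs C n) := rfl

end ECPnc
namespace ECPnc

variable {C : Ctx}

lemma k_lt_succ (C : Ctx) (n : ℕ) : (stgs C n).k < (stgs C (n + 1)).k := by
  have := nK_ge₂ (stgs C n)
  have h2 : (stgs C (n+1)).k = nK C (stgs C n) := rfl
  omega

lemma k_le (C : Ctx) {i j : ℕ} (h : i ≤ j) : (stgs C i).k ≤ (stgs C j).k := by
  induction j, h using Nat.le_induction with
  | base => exact le_refl _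
  | succ j hij ih => have := k_lt_succ C j; omega

lemma k_ge_id (C : Ctx) (n : ℕ) : n + 1 ≤ (stgs C n).k := by
  induction n with
  | zero =>
    have : (4:ℕ) ≤ (stgs C 0).k := le_max_right _ _
    omega
  | succ n ih => have := k_lt_succ C n; omega

lemma M_succ (C : Ctx) (n : ℕ) : (stgs C (n + 1)).M = (stgs C n).k + 3 := rfl

lemma p_agree (C : Ctx) {i j : ℕ} (h : i ≤ j) :
    ∀ m < (stgs C i).k, (stgs C j).p m = (stgs C i).p m := by
  induction j, h using Nat.le_induction with
  | base => intro m _; rfl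
  | succ j hij ih =>
    intro m hm
    have hm' : m < (stgs C j).k := lt_of_lt_of_le hm (k_le C hij)
    have : (stgs C (j+1)).p m = (stgs C j).p m := nP_lt (stgs C j) hm'
    rw [this, ih m hm]

lemma pin (C : Ctx) {i j : ℕ} (h : i ≤ j) :
    ∀ m < (stgs C i).M, C.F (stgs C j).p m = C.F (stgs C i).p m :=
  (stgs C i).hmod (stgs C j).p (Stg.mem_Dom _) (fun m hm => p_agree C h m hm)

noncomputable def plim (C : Ctx) : ℕ → ℕ := fun m => (stgs C (m + 1)).p m

lemma plim_agree (C : Ctx) (i : ℕ) : ∀ m < (stgs C i).k, plim C m = (stgs C i).p m := by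
  intro m hm
  rcases le_total (m + 1) i with h | h
  · exact (p_agree C h m (by have := k_ge_id C m; have := k_ge_id C (m+1); omega)).symm
    -- note: need m < k_{m+1}
  · exact p_agree C h m hm

def Tinf (C : Ctx) : Set (List Bool) := {w | ∃ k, plim C k = C.code w + 1}

lemma plim_enum (C : Ctx) : EnumeratesTree C.code (plim C) (Tinf C) := rfl

lemma Tinf_extract {w : List Bool} (hw : w ∈ Tinf C) :
    ∃ i, w ∈ TW (stgs C i).W ∧ w.length < (stgs C i).k := by
  obtain ⟨k, hk⟩ := hw
  obtain ⟨w', hw', hcw, hlw⟩ := (stgs C (k + 1)).hvals k (C.code w) hk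
  obtain rfl := C.hcode hcw
  exact ⟨k + 1, hw', by have := k_ge_id C (k+1); omega⟩

lemma persist (C : Ctx) {i j : ℕ} (h : i ≤ j) {w : List Bool}
    (hw : w ∈ TW (stgs C i).W) (hl : w.length ≤ (stgs C i).k) : w ∈ TW (stgs C j).W := by
  induction j, h using Nat.le_induction with
  | base => exact hw
  | succ j hij ih => exact persist_step (stgs C j) ih (le_trans hl (k_le C hij))

lemma reveal (C : Ctx) {i : ℕ} {w : List Bool}
    (hw : w ∈ TW (stgs C i).W) (hl : w.length ≤ (stgs C i).k) : w ∈ Tinf C := by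
  have hij : i ≤ max i (Encodable.encode w) := le_max_left _ _
  set j := max i (Encodable.encode w) with hj
  have haj : Encodable.encode w < (stgs C j).k := by
    have h1 := k_ge_id C j
    have h2 : Encodable.encode w ≤ j := le_max_right _ _
    omega
  have hmeq : Nat.pair (Encodable.encode w) (stgs C j).k
      = (stgs C j).k * (stgs C j).k + Encodable.encode w := by
    rw [Nat.pair]
    simp [haj]
  have hm1 : (stgs C j).k ≤ Nat.pair (Encodable.encode w) (stgs C j).k :=
    Nat.right_le_pair _ _
  have hm2 : Nat.pair (Encodable.encode w) (stgs C j).k < (stgs C (j + 1)).k := by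
    have hq : (stgs C j).k * (stgs C j).k + (stgs C j).k + 1 ≤ (stgs C (j + 1)).k :=
      nK_ge₁ (stgs C j)
    omega
  have hw' : w ∈ TW (stgs C (j + 1)).W := persist C (le_trans hij (Nat.le_succ j)) hw hl
  have hlk : w.length ≤ (stgs C j).k := le_trans hl (k_le C hij)
  refine ⟨Nat.pair (Encodable.encode w) (stgs C j).k, ?_⟩
  have e1 : plim C (Nat.pair (Encodable.encode w) (stgs C j).k)
      = (stgs C (j + 1)).p (Nat.pair (Encodable.encode w) (stgs C j).k) :=
    p_agree C (by have hjk := k_ge_id C j; omega :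
      j + 1 ≤ Nat.pair (Encodable.encode w) (stgs C j).k + 1) _ hm2
  have e2 : (stgs C (j + 1)).p (Nat.pair (Encodable.encode w) (stgs C j).k)
      = emit C.code (TW (nW C (stgs C j))) (Nat.pair (Encodable.encode w) (stgs C j).k) :=
    nP_ge (stgs C j) (by omega)
  rw [e1, e2]
  exact emit_spec₂ hw' (stgs C j).k (by omega)

lemma survive (C : Ctx) {i : ℕ} {t : List Bool × Bool} (ht : t ∈ (stgs C i).W)
    (hne : seqt t ≠ C.F (stgs C i).p) {j : ℕ} (hij : i ≤ j) : t ∈ (stgs C j).W := by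
  induction j, hij using Nat.le_induction with
  | base => exact ht
  | succ j hij ih =>
    apply nW_mem_old (stgs C j) ih
    intro heq
    apply hne
    have hxi := Stg.tooth_spec (stgs C i)
    have hsep : seqt t = seqt (stgs C i).tooth := by
      apply seqt_sep (M := (stgs C i).M)
      · have := (stgs C i).hM1 t ht; omega
      · have := (stgs C i).hM1 _ (Stg.tooth_mem (stgs C i)); omega
      · intro m hm
        rw [heq, pin C hij m hm, hxi]
    rw [hsep, ← hxi]

lemma succ_tooth (C : Ctx) (i : ℕ) :
    (stgs C (i + 1)).tooth = (pref (C.F (stgs C i).p) (stgs C i).k, !(stgs C i).tooth.2) ∨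
    (stgs C (i + 1)).tooth =
      (pref (C.F (stgs C i).p) (stgs C i).k ++ [!(stgs C i).tooth.2], (stgs C i).tooth.2) := by
  have hmem : (stgs C (i + 1)).tooth ∈ nW C (stgs C i) := Stg.tooth_mem (stgs C (i + 1))
  rcases nW_elim (stgs C i) hmem with h | h | ⟨ht, hne⟩
  · exact Or.inl h
  · exact Or.inr h
  · exfalso
    apply hne
    have hx' := Stg.tooth_spec (stgs C (i + 1))
    have hxi := Stg.tooth_spec (stgs C i)
    have hsep : seqt (stgs C (i + 1)).tooth = seqt (stgs C i).tooth := by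
      apply seqt_sep (M := (stgs C i).M)
      · have := (stgs C i).hM1 _ ht; omega
      · have := (stgs C i).hM1 _ (Stg.tooth_mem (stgs C i)); omega
      · intro m hm
        rw [← hx', pin C (Nat.le_succ i) m hm, hxi]
    rw [hsep, ← hxi]

lemma tooth_len (C : Ctx) (i : ℕ) : (stgs C i).tooth.1.length + 2 ≤ (stgs C i).M :=
  (stgs C i).hM1 _ (Stg.tooth_mem (stgs C i))

lemma flip (C : Ctx) (i : ℕ) :
    C.F (stgs C (i + 1)).p ((stgs C i).k - 1) = (stgs C i).tooth.2 ∧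
    C.F (stgs C (i + 1)).p ((stgs C i).k) = !(stgs C i).tooth.2 := by
  have hx' := Stg.tooth_spec (stgs C (i + 1))
  have hxi := Stg.tooth_spec (stgs C i)
  have hlen := tooth_len C i
  have hMk := (stgs C i).hMk
  have hK1 : (stgs C i).tooth.1.length ≤ (stgs C i).k - 1 := by omega
  have hxiK : C.F (stgs C i).p ((stgs C i).k - 1) = (stgs C i).tooth.2 := by
    rw [hxi]
    exact seqt_ge hK1
  rcases succ_tooth C i with h | h
  · rw [hx', h]
    constructor
    · rw [seqt_pref_agree _ _ (by omega : (stgs C i).k - 1 < (stgs C i).k)]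
      exact hxiK
    · exact seqt_pref_tail _ _ (le_refl _)
  · rw [hx', h]
    constructor
    · rw [seqt_prefapp_agree _ _ _ (by omega : (stgs C i).k - 1 < (stgs C i).k)]
      exact hxiK
    · exact seqt_prefapp_at _ _ _ _

end ECPnc
namespace ECPnc

variable {C : Ctx}

lemma tooth_pref_Tinf (C : Ctx) {i : ℕ} {t : List Bool × Bool}
    (hsurv : ∀ j, i ≤ j → t ∈ (stgs C j).W) (m : ℕ) : pref (seqt t) m ∈ Tinf C := by
  have hj : t ∈ (stgs C (max i m)).W := hsurv _ (le_max_left _ _)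
  apply reveal C (TW_mem_pref hj m)
  have h1 := k_ge_id C (max i m)
  have h2 : m ≤ max i m := le_max_right _ _
  rw [pref_length]
  omega

lemma ecp_of_survivor (C : Ctx) {i : ℕ} {t : List Bool × Bool}
    (hsurv : ∀ j, i ≤ j → t ∈ (stgs C j).W) {w : List Bool}
    (hw : w = pref (seqt t) w.length) :
    ∃ u ∈ Tinf C, w <+: u ∧ ∃ b : Bool, ∀ n : ℕ, u ++ List.replicate n b ∈ Tinf C := by
  refine ⟨pref (seqt t) (max w.length t.1.length), tooth_pref_Tinf C hsurv _, ?_, t.2,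
    fun n => ?_⟩
  · conv_lhs => rw [hw]
    exact pref_prefix (le_max_left _ _)
  · rw [TW_tail t (le_max_right _ _) n]
    exact tooth_pref_Tinf C hsurv _

lemma Tinf_ecptree (C : Ctx) : ECPTree (Tinf C) := by
  refine ⟨⟨[], ?_⟩, ?_, ?_⟩
  · refine reveal C (i := 0) ⟨([], false), ?_, rfl⟩ (by simp)
    show ([], false) ∈ W0
    simp [W0]
  · intro w hw u hu
    obtain ⟨i, hwi, hli⟩ := Tinf_extract hw
    have hul : u.length ≤ (stgs C i).k := by
      have := hu.length_le
      omega
    exact reveal C (TW_prefix_closed hwi hu) hul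
  · intro w hw
    obtain ⟨i, hwi, hli⟩ := Tinf_extract hw
    obtain ⟨t, ht, hw'⟩ := hwi
    by_cases hx : seqt t = C.F (stgs C i).p
    · have hABne : seqt (pref (C.F (stgs C i).p) (stgs C i).k, !(stgs C i).tooth.2) ≠
          seqt (pref (C.F (stgs C i).p) (stgs C i).k ++ [!(stgs C i).tooth.2],
            (stgs C i).tooth.2) := by
        intro h
        have h1 : seqt (pref (C.F (stgs C i).p) (stgs C i).k, !(stgs C i).tooth.2)
            ((stgs C i).k + 1) = !(stgs C i).tooth.2 := seqt_pref_tail _ _ (by omega)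
        have h2 : seqt (pref (C.F (stgs C i).p) (stgs C i).k ++ [!(stgs C i).tooth.2],
            (stgs C i).tooth.2) ((stgs C i).k + 1) = (stgs C i).tooth.2 :=
          seqt_prefapp_tail _ _ _ (le_refl _)
        rw [h, h2] at h1
        exact (by cases (stgs C i).tooth.2 <;> simp :
          ¬ ((stgs C i).tooth.2 = !(stgs C i).tooth.2)) h1
      have hsurvivor : ∃ t', (∀ j, i + 1 ≤ j → t' ∈ (stgs C j).W) ∧
          ∀ m < (stgs C i).k, seqt t' m = C.F (stgs C i).p m := by
        rcases succ_tooth C i with hA | hB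
        · refine ⟨_, fun j hj => survive C (nW_memB (stgs C i)) ?_ hj,
            fun m hm => seqt_prefapp_agree _ _ _ hm⟩
          rw [Stg.tooth_spec (stgs C (i + 1)), hA]
          exact fun h => hABne h.symm
        · refine ⟨_, fun j hj => survive C (nW_memA (stgs C i)) ?_ hj,
            fun m hm => seqt_pref_agree _ _ hm⟩
          rw [Stg.tooth_spec (stgs C (i + 1)), hB]
          exact hABne
      obtain ⟨t', hsurv, hagr⟩ := hsurvivor
      apply ecp_of_survivor C hsurv
      conv_lhs => rw [hw']
      apply pref_eq_iff.mpr
      intro m hm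
      rw [hx, hagr m (by omega)]
    · exact ecp_of_survivor C (fun j hj => survive C ht hx hj) hw'

lemma master (C : Ctx) : False := by
  have hecp : ECPTree (Tinf C) := Tinf_ecptree C
  have hmem : plim C ∈ Dom C.code := ⟨Tinf C, hecp, rfl⟩
  obtain ⟨-, N, bstar, hNb⟩ := C.hcorr (plim C) (Tinf C) hecp rfl
  have hpinlim : ∀ i, ∀ m < (stgs C i).M, C.F (plim C) m = C.F (stgs C i).p m := fun i =>
    (stgs C i).hmod (plim C) hmem (fun m hm => plim_agree C i m hm)
  have hM : (stgs C (N + 1)).M = (stgs C N).k + 3 := M_succ C N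
  have hkN := k_ge_id C N
  have h1 : C.F (plim C) ((stgs C N).k - 1) = (stgs C N).tooth.2 := by
    rw [hpinlim (N + 1) _ (by omega), (flip C N).1]
  have h2 : C.F (plim C) ((stgs C N).k) = !(stgs C N).tooth.2 := by
    rw [hpinlim (N + 1) _ (by omega), (flip C N).2]
  have e1 := hNb ((stgs C N).k - 1) (by omega)
  have e2 := hNb ((stgs C N).k) (by omega)
  rw [h1] at e1
  rw [h2] at e2
  rw [e1] at e2
  exact (by cases bstar <;> simp : ¬ ((!bstar) = bstar)) e2

end ECPnc


/-- ECP is not continuous: there is no continuous function producing an eventually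
constant path of a tree with eventually constant paths everywhere from an enumeration
of the tree. -/
theorem ECP_not_continuous (code : List Bool → ℕ) (hcode : Function.Injective code) :
    ¬ ∃ F : (ℕ → ℕ) → (ℕ → Bool),
      ContinuousOn F {p | ∃ T, ECPTree T ∧ EnumeratesTree code p T} ∧
      ∀ (p : ℕ → ℕ) (T : Set (List Bool)), ECPTree T → EnumeratesTree code p T →
        ECPath T (F p) := by
  rintro ⟨F, hF, hcorr⟩
  exact ECPnc.master ⟨code, hcode, F, hF, hcorr⟩
end

section
/- ECP is topologically Weihrauch equivalent to overt choice for ℚ. That is: (1) there exist continuous K and H such that K maps every p enumerating a nonempty tree T ⊆ List Bool with eventually constant paths everywhere to a name of some nonempty closed set A ⊆ ℚ, and H maps (p, q), for any name q of any point of A, to an eventually constant path of T; and (2) there exist continuous K' and H' such that K' maps every name p of a nonempty closed set A ⊆ ℚ to an enumeration of some nonempty tree T ⊆ List Bool with eventually constant paths everywhere, and H' maps (p, x), for x any eventually constant path of T, to a name of some point of A. -/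
/-- The basis of ℚ given by an enumeration `e` of pairs of rationals: the `n`-th basic
open set is the rational open interval with endpoints `e n` (i.e. `Iₙ ∩ ℚ`). -/
def ratBasis (e : ℕ → ℚ × ℚ) (n : ℕ) : Set ℚ := Set.Ioo (e n).1 (e n).2

open scoped Classical

noncomputable section

namespace ECPOC

/-- a fixed enumeration of the rationals -/
def qe : ℕ → ℚ := fun n => (Denumerable.eqv ℚ).symm n

lemma qe_surj : Function.Surjective qe := (Denumerable.eqv ℚ).symm.surjective

/-- Node data for the interval scheme. -/
structure Nd where
  lo : EReal
  hi : EReal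
  t0 : ℚ
  t1 : ℚ
  near : Bool
  m : ℕ

namespace Nd

/-- the real open interval of the node -/
def V (d : Nd) : Set ℝ := {x : ℝ | d.lo < (x : EReal) ∧ (x : EReal) < d.hi}

/-- target for bit `b` -/
def t (d : Nd) (b : Bool) : ℚ := if b then d.t1 else d.t0

lemma mem_V_iff {d : Nd} {x : ℝ} : x ∈ d.V ↔ d.lo < (x:EReal) ∧ (x:EReal) < d.hi := Iff.rfl

/-- magnitude used for the split -/
def mag (d : Nd) : ℚ := min ((1/2)^d.m) |d.t (!d.near) - d.t d.near|

/-- the split point of the node: an irrational point strictly between the two targets,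
`(1/2)^m`-close to the near target. -/
def split (d : Nd) : ℝ :=
  (d.t d.near : ℝ) +
    (if d.t d.near < d.t (!d.near) then (d.mag : ℝ) else -(d.mag : ℝ)) / Real.sqrt 2

def childLo (d : Nd) (b : Bool) : EReal :=
  if ((d.t b : ℝ)) < d.split then d.lo else (d.split : EReal)

def childHi (d : Nd) (b : Bool) : EReal :=
  if ((d.t b : ℝ)) < d.split then (d.split : EReal) else d.hi

def sideSet (d : Nd) (b : Bool) : Set ℚ :=
  if Even (d.m + 1) then {x : ℚ | childLo d b < ((x:ℝ):EReal) ∧ x < d.t b}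
  else {x : ℚ | d.t b < x ∧ ((x:ℝ):EReal) < childHi d b}

def fresh (d : Nd) (b : Bool) : ℚ :=
  if h : ∃ i, qe i ∈ sideSet d b then qe (Nat.find h) else 0

/-- child for bit `b` -/
def step (d : Nd) (b : Bool) : Nd :=
  ⟨childLo d b, childHi d b, if b then fresh d b else d.t b,
    if b then d.t b else fresh d b, b, d.m + 1⟩

lemma step_lo (d : Nd) (b : Bool) : (d.step b).lo = childLo d b := rfl
lemma step_hi (d : Nd) (b : Bool) : (d.step b).hi = childHi d b := rfl

/-- the root node -/
def root : Nd := ⟨⊥, ⊤, 0, 1, false, 0⟩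

/-- scheme invariant -/
structure Inv (d : Nd) : Prop where
  t0V : ((d.t0 : ℝ)) ∈ d.V
  t1V : ((d.t1 : ℝ)) ∈ d.V
  tne : d.t0 ≠ d.t1
  loIrr : ∀ x : ℝ, d.lo = (x:EReal) → Irrational x
  hiIrr : ∀ x : ℝ, d.hi = (x:EReal) → Irrational x

lemma step_t_self (d : Nd) (b : Bool) : (d.step b).t b = d.t b := by
  cases b <;> simp [step, t]

lemma step_t_other (d : Nd) (b : Bool) : (d.step b).t (!b) = d.fresh b := by
  cases b <;> simp [step, t]

lemma step_near (d : Nd) (b : Bool) : (d.step b).near = b := rfl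

lemma step_m (d : Nd) (b : Bool) : (d.step b).m = d.m + 1 := rfl

lemma Inv.tV {d : Nd} (h : Inv d) (b : Bool) : ((d.t b : ℝ)) ∈ d.V := by
  cases b
  · exact h.t0V
  · exact h.t1V

lemma Inv.t_ne {d : Nd} (h : Inv d) (b : Bool) : d.t b ≠ d.t (!b) := by
  cases b <;> simp only [t, Bool.not_false, Bool.not_true, if_true, if_false]
  · exact h.tne
  · exact fun hh => h.tne hh.symm

lemma Inv.mag_pos {d : Nd} (h : Inv d) : 0 < d.mag := by
  apply lt_min
  · positivity
  · rw [abs_pos, sub_ne_zero]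
    exact (h.t_ne d.near).symm

lemma Inv.mag_le_pow {d : Nd} : d.mag ≤ (1/2)^d.m := min_le_left _ _

lemma sqrt2_gt_one : (1:ℝ) < Real.sqrt 2 := by
  rw [show (2:ℝ) = 4/2 by norm_num]
  nlinarith [Real.sq_sqrt (by norm_num : (4:ℝ)/2 ≥ 0) , Real.sqrt_nonneg ((4:ℝ)/2)]

lemma Inv.split_irrational {d : Nd} (h : Inv d) : Irrational d.split := by
  have h2 : Irrational (Real.sqrt 2) := irrational_sqrt_two
  have hq : (if d.t d.near < d.t (!d.near) then (d.mag : ℝ) else -(d.mag : ℝ))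
      = ((if d.t d.near < d.t (!d.near) then d.mag else -d.mag : ℚ) : ℝ) := by
    split <;> push_cast <;> ring
  have hne : (if d.t d.near < d.t (!d.near) then d.mag else -d.mag : ℚ) ≠ 0 := by
    have := h.mag_pos
    split <;> intro hh
    · rw [hh] at this; exact lt_irrefl _ this
    · rw [neg_eq_zero] at hh; rw [hh] at this; exact lt_irrefl _ this
  rw [split, hq]
  apply Irrational.ratCast_add
  rw [div_eq_mul_inv]
  apply Irrational.ratCast_mul _ hne
  exact h2.inv

lemma Inv.abs_split_sub {d : Nd} (h : Inv d) :
    |d.split - (d.t d.near : ℝ)| < (1/2:ℝ)^d.m := by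
  have hm : (0:ℝ) < (d.mag : ℝ) := by exact_mod_cast h.mag_pos
  have h1 : (1:ℝ) < Real.sqrt 2 := sqrt2_gt_one
  have key : |d.split - (d.t d.near : ℝ)| = (d.mag : ℝ) / Real.sqrt 2 := by
    rw [split]
    have hpos : (0:ℝ) < (d.mag : ℝ) / Real.sqrt 2 := by positivity
    split
    · rw [add_sub_cancel_left, abs_of_pos hpos]
    · rw [add_sub_cancel_left, neg_div, abs_neg, abs_of_pos hpos]
  rw [key]
  calc (d.mag:ℝ) / Real.sqrt 2 < (d.mag:ℝ) := by
        rw [div_lt_iff₀ (by linarith)]; nlinarith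
    _ ≤ (1/2:ℝ)^d.m := by
        have := @Inv.mag_le_pow d
        calc (d.mag:ℝ) ≤ (((1/2:ℚ))^d.m : ℚ) := by exact_mod_cast this
          _ = (1/2:ℝ)^d.m := by push_cast; ring

/-- the split lies strictly between the two targets -/
lemma Inv.split_btwn {d : Nd} (h : Inv d) :
    ((d.t d.near : ℝ) < d.split ∧ d.split < (d.t (!d.near) : ℝ)) ∨
    ((d.t (!d.near) : ℝ) < d.split ∧ d.split < (d.t d.near : ℝ)) := by
  have hm : (0:ℝ) < (d.mag : ℝ) := by exact_mod_cast h.mag_pos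
  have h1 : (1:ℝ) < Real.sqrt 2 := sqrt2_gt_one
  have hs2 : (0:ℝ) < Real.sqrt 2 := by linarith
  have hmagle : (d.mag : ℝ) ≤ |(d.t (!d.near) : ℝ) - (d.t d.near : ℝ)| := by
    have h0 : d.mag ≤ |d.t (!d.near) - d.t d.near| := min_le_right _ _
    have : ((|d.t (!d.near) - d.t d.near| : ℚ) : ℝ) = |(d.t (!d.near) : ℝ) - (d.t d.near : ℝ)| := by
      push_cast; ring_nf
    rw [← this]; exact_mod_cast h0
  have hdivlt : (d.mag : ℝ) / Real.sqrt 2 < (d.mag : ℝ) := by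
    rw [div_lt_iff₀ hs2]; nlinarith
  have hdivpos : (0:ℝ) < (d.mag : ℝ) / Real.sqrt 2 := by positivity
  rcases lt_or_gt_of_ne (fun hh : (d.t d.near : ℝ) = (d.t (!d.near) : ℝ) =>
      (h.t_ne d.near) (by exact_mod_cast hh)) with hlt | hgt
  · left
    have hif : d.t d.near < d.t (!d.near) := by exact_mod_cast hlt
    rw [split, if_pos hif]
    constructor
    · linarith
    · have : (d.mag : ℝ) ≤ (d.t (!d.near) : ℝ) - (d.t d.near : ℝ) := by
        rwa [abs_of_pos (by linarith)] at hmagle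
      linarith
  · right
    have hif : ¬ d.t d.near < d.t (!d.near) := by
      have : (d.t (!d.near) : ℝ) < (d.t d.near : ℝ) := hgt
      intro hc; exact absurd (by exact_mod_cast hc : (d.t d.near:ℝ) < _) (not_lt.2 this.le)
    rw [split, if_neg hif]
    have : (d.mag : ℝ) ≤ (d.t d.near : ℝ) - (d.t (!d.near) : ℝ) := by
      rw [abs_of_neg (by linarith : (d.t (!d.near) : ℝ) - (d.t d.near : ℝ) < 0)] at hmagle
      linarith
    constructor
    · rw [neg_div]; linarith
    · rw [neg_div]; linarith


lemma coe_lt_coe {x y : ℝ} (h : x < y) : (x:EReal) < (y:EReal) := EReal.coe_lt_coe_iff.2 h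

lemma Inv.split_ne_rat {d : Nd} (h : Inv d) (q : ℚ) : d.split ≠ (q:ℝ) :=
  h.split_irrational.ne_rat q

lemma Inv.split_mem_V {d : Nd} (h : Inv d) : d.split ∈ d.V := by
  rcases h.split_btwn with ⟨h1, h2⟩ | ⟨h1, h2⟩
  · exact ⟨lt_trans (h.tV d.near).1 (coe_lt_coe h1), lt_trans (coe_lt_coe h2) (h.tV (!d.near)).2⟩
  · exact ⟨lt_trans (h.tV (!d.near)).1 (coe_lt_coe h1), lt_trans (coe_lt_coe h2) (h.tV d.near).2⟩

lemma Inv.t_mem_step {d : Nd} (h : Inv d) (b : Bool) : ((d.t b : ℝ)) ∈ (d.step b).V := by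
  rw [mem_V_iff, step_lo, step_hi]
  by_cases hb : ((d.t b : ℝ)) < d.split
  · rw [childLo, childHi, if_pos hb, if_pos hb]
    exact ⟨(h.tV b).1, coe_lt_coe hb⟩
  · have hgt : d.split < (d.t b : ℝ) := lt_of_le_of_ne (not_lt.1 hb) (h.split_ne_rat _)
    rw [childLo, childHi, if_neg hb, if_neg hb]
    exact ⟨coe_lt_coe hgt, (h.tV b).2⟩

lemma Inv.mem_step_V {d : Nd} (h : Inv d) (b : Bool) {x : ℝ} :
    x ∈ (d.step b).V ↔ x ∈ d.V ∧ x ≠ d.split ∧ (x < d.split ↔ ((d.t b : ℝ)) < d.split) := by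
  have hsV := h.split_mem_V
  by_cases hb : ((d.t b : ℝ)) < d.split
  · rw [mem_V_iff, step_lo, step_hi]; simp only [childLo, childHi, if_pos hb]
    constructor
    · rintro ⟨h1, h2⟩
      have hxs : x < d.split := EReal.coe_lt_coe_iff.1 h2
      exact ⟨⟨h1, lt_trans h2 hsV.2⟩, ne_of_lt hxs, by simp [hxs, hb]⟩
    · rintro ⟨⟨h1, _⟩, hne, hiff⟩
      exact ⟨h1, coe_lt_coe (hiff.2 hb)⟩
  · have hgt : d.split < (d.t b : ℝ) := lt_of_le_of_ne (not_lt.1 hb) (h.split_ne_rat _)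
    rw [mem_V_iff, step_lo, step_hi]; simp only [childLo, childHi, if_neg hb]
    constructor
    · rintro ⟨h1, h2⟩
      have hxs : d.split < x := EReal.coe_lt_coe_iff.1 h1
      exact ⟨⟨lt_trans hsV.1 h1, h2⟩, (ne_of_lt hxs).symm, by simp [not_lt.2 hxs.le, hb]⟩
    · rintro ⟨⟨_, h2⟩, hne, hiff⟩
      have : ¬ x < d.split := fun hc => hb (hiff.1 hc)
      exact ⟨coe_lt_coe (lt_of_le_of_ne (not_lt.1 this) (Ne.symm hne)), h2⟩

lemma Inv.step_V_subset {d : Nd} (h : Inv d) (b : Bool) : (d.step b).V ⊆ d.V :=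
  fun _ hx => ((h.mem_step_V b).1 hx).1

lemma Inv.targets_sides {d : Nd} (h : Inv d) :
    (((d.t false : ℝ)) < d.split ∧ ¬ ((d.t true : ℝ)) < d.split) ∨
    (((d.t true : ℝ)) < d.split ∧ ¬ ((d.t false : ℝ)) < d.split) := by
  have hsb := h.split_btwn
  cases hn : d.near <;> rw [hn] at hsb <;> simp only [Bool.not_false, Bool.not_true] at hsb
  · rcases hsb with ⟨ha, hb⟩ | ⟨ha, hb⟩
    · exact Or.inl ⟨ha, not_lt.2 hb.le⟩
    · exact Or.inr ⟨ha, not_lt.2 hb.le⟩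
  · rcases hsb with ⟨ha, hb⟩ | ⟨ha, hb⟩
    · exact Or.inr ⟨ha, not_lt.2 hb.le⟩
    · exact Or.inl ⟨ha, not_lt.2 hb.le⟩

lemma Inv.step_V_disjoint {d : Nd} (h : Inv d) {x : ℝ}
    (h0 : x ∈ (d.step false).V) (h1 : x ∈ (d.step true).V) : False := by
  rcases (h.mem_step_V false).1 h0 with ⟨_, _, hf⟩
  rcases (h.mem_step_V true).1 h1 with ⟨_, _, ht⟩
  rcases h.targets_sides with ⟨ha, hb⟩ | ⟨ha, hb⟩
  · exact hb (ht.1 (hf.2 ha))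
  · exact hb (hf.1 (ht.2 ha))

lemma Inv.step_V_cover {d : Nd} (h : Inv d) {x : ℝ} (hx : x ∈ d.V) (hne : x ≠ d.split) :
    x ∈ (d.step false).V ∨ x ∈ (d.step true).V := by
  have hor := h.targets_sides
  rcases lt_or_gt_of_ne hne with hlt | hgt
  · rcases hor with ⟨hf, _⟩ | ⟨ht, _⟩
    · exact Or.inl ((h.mem_step_V false).2 ⟨hx, hne, by simp [hlt, hf]⟩)
    · exact Or.inr ((h.mem_step_V true).2 ⟨hx, hne, by simp [hlt, ht]⟩)
  · rcases hor with ⟨_, ht⟩ | ⟨_, hf⟩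
    · exact Or.inr ((h.mem_step_V true).2 ⟨hx, hne, by simp [not_lt.2 hgt.le, ht]⟩)
    · exact Or.inl ((h.mem_step_V false).2 ⟨hx, hne, by simp [not_lt.2 hgt.le, hf]⟩)


lemma Inv.sideSet_nonempty {d : Nd} (h : Inv d) (b : Bool) : ∃ i, qe i ∈ sideSet d b := by
  have htb := h.t_mem_step b
  rw [mem_V_iff, step_lo, step_hi] at htb
  rw [sideSet]
  split
  · rcases EReal.exists_rat_btwn_of_lt htb.1 with ⟨x, hx1, hx2⟩
    rcases qe_surj x with ⟨i, rfl⟩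
    exact ⟨i, hx1, by exact_mod_cast EReal.coe_lt_coe_iff.1 hx2⟩
  · rcases EReal.exists_rat_btwn_of_lt htb.2 with ⟨x, hx1, hx2⟩
    rcases qe_surj x with ⟨i, rfl⟩
    exact ⟨i, by exact_mod_cast EReal.coe_lt_coe_iff.1 hx1, hx2⟩

lemma Inv.fresh_mem_sideSet {d : Nd} (h : Inv d) (b : Bool) : d.fresh b ∈ sideSet d b := by
  rw [fresh, dif_pos (h.sideSet_nonempty b)]
  exact Nat.find_spec (h.sideSet_nonempty b)

lemma Inv.sideSet_sub_step {d : Nd} (h : Inv d) (b : Bool) {x : ℚ}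
    (hx : x ∈ sideSet d b) : ((x:ℝ)) ∈ (d.step b).V := by
  have htb := h.t_mem_step b
  rw [mem_V_iff, step_lo, step_hi] at htb
  rw [mem_V_iff, step_lo, step_hi]
  rw [sideSet] at hx
  by_cases he : Even (d.m + 1)
  · rw [if_pos he] at hx
    exact ⟨hx.1, lt_trans (coe_lt_coe (by exact_mod_cast hx.2)) htb.2⟩
  · rw [if_neg he] at hx
    exact ⟨lt_trans htb.1 (coe_lt_coe (by exact_mod_cast hx.1)), hx.2⟩

lemma Inv.fresh_mem_step {d : Nd} (h : Inv d) (b : Bool) :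
    ((d.fresh b : ℝ)) ∈ (d.step b).V := h.sideSet_sub_step b (h.fresh_mem_sideSet b)

lemma Inv.fresh_side {d : Nd} (h : Inv d) (b : Bool) :
    (Even (d.m + 1) → d.fresh b < d.t b) ∧ (¬ Even (d.m + 1) → d.t b < d.fresh b) := by
  have hf := h.fresh_mem_sideSet b
  rw [sideSet] at hf
  constructor <;> intro he
  · rw [if_pos he] at hf; exact hf.2
  · rw [if_neg he] at hf; exact hf.1

lemma Inv.fresh_ne {d : Nd} (h : Inv d) (b : Bool) : d.fresh b ≠ d.t b := by
  rcases h.fresh_side b with ⟨h1, h2⟩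
  by_cases he : Even (d.m + 1)
  · exact ne_of_lt (h1 he)
  · exact (ne_of_lt (h2 he)).symm

lemma Inv.inv_step {d : Nd} (h : Inv d) (b : Bool) : Inv (d.step b) := by
  have htb := h.t_mem_step b
  have hfr := h.fresh_mem_step b
  constructor
  · cases b
    · exact htb
    · exact hfr
  · cases b
    · exact hfr
    · exact htb
  · cases b <;> simp only [step] <;> intro hc
    · exact h.fresh_ne false (by exact hc.symm)
    · exact h.fresh_ne true hc
  · intro x hx
    rw [step_lo, childLo] at hx
    split at hx
    · exact h.loIrr x hx
    · have : d.split = x := by exact_mod_cast hx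
      rw [← this]; exact h.split_irrational
  · intro x hx
    rw [step_hi, childHi] at hx
    split at hx
    · have : d.split = x := by exact_mod_cast hx
      rw [← this]; exact h.split_irrational
    · exact h.hiIrr x hx

lemma root_inv : Inv root := by
  constructor
  · exact ⟨by exact EReal.bot_lt_coe _, by exact EReal.coe_lt_top _⟩
  · exact ⟨by exact EReal.bot_lt_coe _, by exact EReal.coe_lt_top _⟩
  · norm_num [root]
  · intro x hx; exact absurd hx.symm (EReal.coe_ne_bot x)
  · intro x hx; exact absurd hx.symm (EReal.coe_ne_top x)

end Nd

/-- the node of a word -/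
def nodeOf (w : List Bool) : Nd := w.foldl Nd.step Nd.root

lemma nodeOf_nil : nodeOf [] = Nd.root := rfl

lemma nodeOf_concat (w : List Bool) (b : Bool) :
    nodeOf (w ++ [b]) = (nodeOf w).step b := by
  rw [nodeOf, List.foldl_append]; rfl

lemma inv_nodeOf (w : List Bool) : Nd.Inv (nodeOf w) := by
  induction w using List.reverseRecOn with
  | nil => exact Nd.root_inv
  | append_singleton v b ih => rw [nodeOf_concat]; exact ih.inv_step b

lemma m_nodeOf (w : List Bool) : (nodeOf w).m = w.length := by
  induction w using List.reverseRecOn with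
  | nil => rfl
  | append_singleton v b ih =>
      rw [nodeOf_concat, Nd.step_m, ih, List.length_append, List.length_singleton]

lemma nodeOf_append_subset (w u : List Bool) : (nodeOf (w ++ u)).V ⊆ (nodeOf w).V := by
  induction u using List.reverseRecOn with
  | nil => rw [List.append_nil]
  | append_singleton v b ih =>
      rw [← List.append_assoc, nodeOf_concat]
      exact subset_trans ((inv_nodeOf (w ++ v)).step_V_subset b) ih

lemma nodeOf_prefix_subset {w w' : List Bool} (h : w <+: w') :
    (nodeOf w').V ⊆ (nodeOf w).V := by
  rcases h with ⟨u, rfl⟩; exact nodeOf_append_subset w u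

lemma nodeOf_level_disjoint : ∀ {w w' : List Bool}, w.length = w'.length → w ≠ w' →
    ∀ {x : ℝ}, x ∈ (nodeOf w).V → x ∈ (nodeOf w').V → False := by
  intro w
  induction w using List.reverseRecOn with
  | nil =>
      intro w' hlen hne
      exact absurd (List.eq_nil_of_length_eq_zero hlen.symm).symm hne
  | append_singleton v a ih =>
      intro w' hlen hne x hx hx'
      rcases List.eq_nil_or_concat w' with rfl | ⟨v', a', rfl⟩
      · rw [List.length_append] at hlen; simp at hlen
      · rw [List.concat_eq_append] at hx' hne hlen
        by_cases hv : v = v'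
        · subst hv
          have ha : a ≠ a' := fun hc => hne (by rw [hc])
          rw [nodeOf_concat] at hx hx'
          cases a <;> cases a' <;> first
            | exact ha rfl
            | exact (inv_nodeOf v).step_V_disjoint hx hx'
            | exact (inv_nodeOf v).step_V_disjoint hx' hx
        · have hlv : v.length = v'.length := by
            have h1 : (v ++ [a]).length = v.length + 1 := by simp
            have h2 : (v' ++ [a']).length = v'.length + 1 := by simp
            omega
          exact ih hlv hv (nodeOf_append_subset v [a] hx) (nodeOf_append_subset v' [a'] hx')

lemma rat_mem_child (w : List Bool) {q : ℚ} (hq : ((q:ℝ)) ∈ (nodeOf w).V) :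
    ∃ b, ((q:ℝ)) ∈ (nodeOf (w ++ [b])).V := by
  have hne : (q:ℝ) ≠ (nodeOf w).split := fun hc =>
    (inv_nodeOf w).split_irrational.ne_rat q hc.symm
  rcases (inv_nodeOf w).step_V_cover hq hne with h | h
  · exact ⟨false, by rw [nodeOf_concat]; exact h⟩
  · exact ⟨true, by rw [nodeOf_concat]; exact h⟩


/-! ### chains: constant tails -/

/-- the pinned rational of the eventually constant branch `w b^ω` -/
def pin (w : List Bool) (b : Bool) : ℚ := (nodeOf w).t b

lemma chain_concat (w : List Bool) (b : Bool) (n : ℕ) :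
    w ++ List.replicate (n+1) b = (w ++ List.replicate n b) ++ [b] := by
  rw [List.replicate_succ', ← List.append_assoc]

lemma chain_t (w : List Bool) (b : Bool) : ∀ n, (nodeOf (w ++ List.replicate n b)).t b = pin w b := by
  intro n
  induction n with
  | zero => rw [List.replicate_zero, List.append_nil]; rfl
  | succ n ih => rw [chain_concat, nodeOf_concat, Nd.step_t_self]; exact ih

lemma chain_near (w : List Bool) (b : Bool) (n : ℕ) :
    (nodeOf (w ++ List.replicate (n+1) b)).near = b := by
  rw [chain_concat, nodeOf_concat]; rfl

lemma pin_mem_chain (w : List Bool) (b : Bool) (n : ℕ) :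
    ((pin w b : ℝ)) ∈ (nodeOf (w ++ List.replicate n b)).V := by
  have := (inv_nodeOf (w ++ List.replicate n b)).tV b
  rwa [chain_t] at this

lemma pin_mem (w : List Bool) (b : Bool) :
    ((pin w b : ℝ)) ∈ (nodeOf w).V := by
  have := pin_mem_chain w b 0
  rwa [List.replicate_zero, List.append_nil] at this

/-- side of the split relative to the near target -/
lemma Nd.Inv.split_side {d : Nd} (h : Nd.Inv d) :
    d.split < ((d.t d.near : ℝ)) ↔ ((d.t (!d.near) : ℝ)) < ((d.t d.near : ℝ)) := by
  rcases h.split_btwn with ⟨h1, h2⟩ | ⟨h1, h2⟩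
  · exact ⟨fun hc => absurd hc (not_lt.2 h1.le), fun hc => absurd (lt_trans h1 h2) (not_lt.2 hc.le)⟩
  · exact ⟨fun _ => lt_trans h1 h2, fun _ => h2⟩

/-- the split of a chain node lies below the pin iff the depth is even -/
lemma chain_split_side (w : List Bool) (b : Bool) (n : ℕ) :
    (nodeOf (w ++ List.replicate (n+1) b)).split < ((pin w b : ℝ)) ↔
      Even (w.length + (n+1)) := by
  set c := nodeOf (w ++ List.replicate (n+1) b) with hc
  have hinv : Nd.Inv c := inv_nodeOf _
  have hnear : c.near = b := chain_near w b n
  have htb : c.t b = pin w b := chain_t w b (n+1)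
  have hm : c.m = w.length + (n+1) := by
    rw [hc, m_nodeOf, List.length_append, List.length_replicate]
  -- c.t (!b) is the fresh target created at the last step, with parity side c.m
  have hfresh : c.t (!b) = (nodeOf (w ++ List.replicate n b)).fresh b := by
    rw [hc, chain_concat, nodeOf_concat, Nd.step_t_other]
  have hside := (inv_nodeOf (w ++ List.replicate n b)).fresh_side b
  have hmprev : (nodeOf (w ++ List.replicate n b)).m + 1 = w.length + (n+1) := by
    rw [m_nodeOf, List.length_append, List.length_replicate]; omega
  have hchain_prev_t : (nodeOf (w ++ List.replicate n b)).t b = pin w b := chain_t w b n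
  have hss := hinv.split_side
  rw [hnear, htb, hfresh] at hss
  rw [hss]
  by_cases he : Even (w.length + (n+1))
  · have := hside.1 (by rwa [hmprev]); rw [hchain_prev_t] at this
    simp only [he, iff_true]
    exact_mod_cast this
  · have := hside.2 (by rwa [hmprev]); rw [hchain_prev_t] at this
    simp only [he, iff_false, not_lt]
    exact_mod_cast le_of_lt (by exact_mod_cast this)

lemma chain_split_near (w : List Bool) (b : Bool) (n : ℕ) :
    |(nodeOf (w ++ List.replicate (n+1) b)).split - ((pin w b : ℝ))| <
      (1/2:ℝ)^(w.length + (n+1)) := by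
  set c := nodeOf (w ++ List.replicate (n+1) b) with hc
  have hinv : Nd.Inv c := inv_nodeOf _
  have hnear : c.near = b := chain_near w b n
  have htb : c.t b = pin w b := chain_t w b (n+1)
  have hm : c.m = w.length + (n+1) := by
    rw [hc, m_nodeOf, List.length_append, List.length_replicate]
  have := hinv.abs_split_sub
  rwa [hnear, htb, hm] at this

/-- membership in the next chain node constrains position relative to the split -/
lemma chain_side_constraint (w : List Bool) (b : Bool) (n : ℕ) {x : ℝ}
    (hx : x ∈ (nodeOf (w ++ List.replicate (n+1) b)).V) :
    x ≠ (nodeOf (w ++ List.replicate n b)).split ∧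
    (x < (nodeOf (w ++ List.replicate n b)).split ↔
      ((pin w b : ℝ)) < (nodeOf (w ++ List.replicate n b)).split) := by
  rw [chain_concat, nodeOf_concat] at hx
  have h := ((inv_nodeOf (w ++ List.replicate n b)).mem_step_V b).1 hx
  rw [chain_t w b n] at h
  exact ⟨h.2.1, h.2.2⟩

/-- main shrinkage bound along a constant chain -/
lemma chain_shrink (w : List Bool) (b : Bool) (n : ℕ) {x : ℝ}
    (hx : x ∈ (nodeOf (w ++ List.replicate (n+3) b)).V) :
    |x - ((pin w b : ℝ))| < (1/2:ℝ)^(w.length + (n+1)) := by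
  have hx2 : x ∈ (nodeOf (w ++ List.replicate (n+2) b)).V :=
    nodeOf_prefix_subset ⟨[b], (chain_concat w b (n+2)).symm⟩ hx
  have hc1 := chain_side_constraint w b (n+1) hx2
  have hc2 := chain_side_constraint w b (n+2) hx
  have hs1 := chain_split_near w b n
  have hs2 := chain_split_near w b (n+1)
  set s1 := (nodeOf (w ++ List.replicate (n+1) b)).split with hs1def
  set s2 := (nodeOf (w ++ List.replicate (n+2) b)).split with hs2def
  set η := ((pin w b : ℝ)) with hetadef
  have hside1 := chain_split_side w b n
  have hside2 := chain_split_side w b (n+1)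
  have hs1ne : s1 ≠ η := (inv_nodeOf _).split_irrational.ne_rat _
  have hs2ne : s2 ≠ η := (inv_nodeOf _).split_irrational.ne_rat _
  have hb1 : (1/2:ℝ)^(w.length + (n+2)) ≤ (1/2:ℝ)^(w.length + (n+1)) := by
    apply pow_le_pow_of_le_one <;> norm_num
  rw [abs_lt]; rw [abs_lt] at hs1 hs2
  have harith : w.length + (n+1) + 1 = w.length + (n+2) := by omega
  by_cases he : Even (w.length + (n+1))
  · have h1 : s1 < η := hside1.2 he
    have h2 : η < s2 := by
      have : ¬ s2 < η := fun hcon => by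
        have h4 := hside2.1 hcon
        have h3 : w.length + (n+2) = (w.length + (n+1)) + 1 := by omega
        rw [h3, Nat.even_add_one] at h4; exact h4 he
      exact lt_of_le_of_ne (not_lt.1 this) (Ne.symm hs2ne)
    have hx_gt : s1 < x := by
      rcases lt_or_gt_of_ne hc1.1 with hlt | hgt
      · exact absurd (hc1.2.1 hlt) (not_lt.2 h1.le)
      · exact hgt
    have hx_lt : x < s2 := hc2.2.2 h2
    constructor <;> nlinarith [hs1.1, hs1.2, hs2.1, hs2.2]
  · have h1 : η < s1 := by
      have : ¬ s1 < η := fun hcon => he (hside1.1 hcon)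
      exact lt_of_le_of_ne (not_lt.1 this) (Ne.symm hs1ne)
    have h2 : s2 < η := by
      apply hside2.2
      have h3 : w.length + (n+2) = (w.length + (n+1)) + 1 := by omega
      rw [h3, Nat.even_add_one]; exact he
    have hx_lt : x < s1 := hc1.2.2 h1
    have hx_gt : s2 < x := by
      rcases lt_or_gt_of_ne hc2.1 with hlt | hgt
      · exact absurd (hc2.2.1 hlt) (not_lt.2 h2.le)
      · exact hgt
    constructor <;> nlinarith [hs1.1, hs1.2, hs2.1, hs2.2]


/-! ### prefixes of an infinite branch -/

def wpf (y : ℕ → Bool) (n : ℕ) : List Bool := List.ofFn fun i : Fin n => y i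

lemma wpf_succ (y : ℕ → Bool) (n : ℕ) : wpf y (n+1) = wpf y n ++ [y n] := by
  rw [wpf, List.ofFn_succ', List.concat_eq_append, wpf]
  congr 1

lemma wpf_length (y : ℕ → Bool) (n : ℕ) : (wpf y n).length = n := by
  rw [wpf, List.length_ofFn]

lemma wpf_node_succ (y : ℕ → Bool) (n : ℕ) :
    nodeOf (wpf y (n+1)) = (nodeOf (wpf y n)).step (y n) := by
  rw [wpf_succ, nodeOf_concat]

lemma wpf_m (y : ℕ → Bool) (n : ℕ) : (nodeOf (wpf y n)).m = n := by
  rw [m_nodeOf, wpf_length]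

lemma wpf_V_succ_subset (y : ℕ → Bool) (n : ℕ) :
    (nodeOf (wpf y (n+1))).V ⊆ (nodeOf (wpf y n)).V := by
  rw [wpf_node_succ]
  exact (inv_nodeOf _).step_V_subset _

/-! ### P3: a branch whose intervals all contain a fixed rational is eventually constant -/

theorem branch_ec (y : ℕ → Bool) (r : ℚ)
    (hy : ∀ n, ((r:ℝ)) ∈ (nodeOf (wpf y n)).V) :
    ∃ N b, ∀ k, N ≤ k → y k = b := by
  classical
  obtain ⟨ir, hir⟩ := qe_surj r
  have ex : ∀ n, ∃ i, ((qe i : ℝ)) ∈ (nodeOf (wpf y n)).V := fun n => ⟨ir, by rw [hir]; exact hy n⟩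
  set ms : ℕ → ℕ := fun n => Nat.find (ex n) with hms
  have ms_mono : Monotone ms := by
    apply monotone_nat_of_le_succ
    intro n
    exact Nat.find_min' (ex n) (wpf_V_succ_subset y n (Nat.find_spec (ex (n+1))))
  have ms_bdd : ∀ n, ms n ≤ ir := fun n => Nat.find_min' (ex n) (by rw [hir]; exact hy n)
  -- the minimal index stabilizes
  have hbdd : BddAbove (Set.range ms) := ⟨ir, by rintro _ ⟨n, rfl⟩; exact ms_bdd n⟩
  obtain ⟨N, hN⟩ : ∃ N, ms N = sSup (Set.range ms) := by
    have := Nat.sSup_mem (Set.range_nonempty ms) hbdd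
    rcases this with ⟨N, hN⟩
    exact ⟨N, hN⟩
  have ms_stable : ∀ n, N ≤ n → ms n = ms N := by
    intro n hn
    refine le_antisymm ?_ (ms_mono hn)
    rw [hN]
    exact le_csSup hbdd ⟨n, rfl⟩
  set qs : ℚ := qe (ms N) with hqs_def
  have hqs_mem : ∀ n, N ≤ n → ((qs : ℝ)) ∈ (nodeOf (wpf y n)).V := by
    intro n hn
    have h0 := Nat.find_spec (ex n)
    have h1 : qe (Nat.find (ex n)) = qs := by
      show qe (ms n) = qs
      rw [ms_stable n hn]
    rwa [h1] at h0
  have hqs_min : ∀ n, N ≤ n → ∀ i, ((qe i : ℝ)) ∈ (nodeOf (wpf y n)).V → ms N ≤ i := by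
    intro n hn i hi
    rw [← ms_stable n hn]
    exact Nat.find_min' (ex n) hi
  -- target lock: if qs is a target, the branch follows it forever
  have lock : ∀ b n, N ≤ n → (nodeOf (wpf y n)).t b = qs →
      ∀ j, y (n + j) = b ∧ (nodeOf (wpf y (n + j))).t b = qs := by
    intro b n hn ht j
    induction j with
    | zero =>
        constructor
        · by_contra hne
          have hyb : y n = !b := by cases b <;> cases hh : y n <;> simp_all
          have h1 : ((qs : ℝ)) ∈ (nodeOf (wpf y (n+1))).V := hqs_mem (n+1) (by omega)
          rw [wpf_node_succ, hyb] at h1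
          have h2 : ((qs : ℝ)) ∈ ((nodeOf (wpf y n)).step b).V := by
            rw [← ht]; exact (inv_nodeOf _).t_mem_step b
          cases b
          · exact (inv_nodeOf (wpf y n)).step_V_disjoint h2 (by simpa using h1)
          · exact (inv_nodeOf (wpf y n)).step_V_disjoint (by simpa using h1) h2
        · rw [Nat.add_zero]; exact ht
    | succ j ih =>
        rcases ih with ⟨ihy, iht⟩
        have hstep : nodeOf (wpf y (n + j + 1)) = (nodeOf (wpf y (n+j))).step b := by
          rw [wpf_node_succ, ihy]
        have ht' : (nodeOf (wpf y (n + (j+1)))).t b = qs := by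
          have : n + (j + 1) = n + j + 1 := by omega
          rw [this, hstep, Nd.step_t_self]; exact iht
        constructor
        · by_contra hne
          have hyb : y (n + (j+1)) = !b := by cases b <;> cases hh : y (n + (j+1)) <;> simp_all
          have h1 : ((qs : ℝ)) ∈ (nodeOf (wpf y (n + (j+1) + 1))).V := hqs_mem _ (by omega)
          rw [wpf_node_succ, hyb] at h1
          have h2 : ((qs : ℝ)) ∈ ((nodeOf (wpf y (n + (j+1)))).step b).V := by
            rw [← ht']; exact (inv_nodeOf _).t_mem_step b
          cases b
          · exact (inv_nodeOf (wpf y (n + (j+1)))).step_V_disjoint h2 (by simpa using h1)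
          · exact (inv_nodeOf (wpf y (n + (j+1)))).step_V_disjoint (by simpa using h1) h2
        · exact ht'
  -- it suffices to find a node where qs is a target
  suffices hB : ∃ n, N ≤ n ∧ ∃ b, (nodeOf (wpf y n)).t b = qs by
    rcases hB with ⟨n, hn, b, ht⟩
    refine ⟨n, b, fun k hk => ?_⟩
    have := (lock b n hn ht (k - n)).1
    rwa [Nat.add_sub_cancel' hk] at this
  -- otherwise, derive a contradiction from the alternating fresh-side rule
  by_contra hno
  push_neg at hno
  -- G(n): position of qs relative to the survivor target
  have hG : ∀ n, N ≤ n → (qs < (nodeOf (wpf y n)).t (y n) ↔ ¬ Even (n+1)) := by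
    intro n hn
    set d := nodeOf (wpf y n) with hd
    have hinv : Nd.Inv d := inv_nodeOf _
    have hqs_ne : qs ≠ d.t (y n) := fun hc => hno n hn (y n) hc.symm
    have hqs_child : ((qs:ℝ)) ∈ (d.step (y n)).V := by
      have := hqs_mem (n+1) (by omega); rwa [wpf_node_succ] at this
    have hqs_notin : qs ∉ Nd.sideSet d (y n) := by
      intro hin
      have hfind := hinv.sideSet_nonempty (y n)
      have hle : Nat.find hfind ≤ ms N := Nat.find_min' hfind hin
      have hge : ms N ≤ Nat.find hfind := by
        apply hqs_min (n+1) (by omega)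
        rw [wpf_node_succ]
        exact hinv.sideSet_sub_step (y n) (Nat.find_spec hfind)
      have : d.fresh (y n) = qs := by
        rw [Nd.fresh, dif_pos hfind, le_antisymm hle hge, hqs_def]
      exact hno (n+1) (by omega) (!(y n)) (by
        rw [wpf_node_succ, Nd.step_t_other]; exact this)
    have hmn : d.m = n := wpf_m y n
    rw [Nd.sideSet, hmn] at hqs_notin
    have hlo : d.childLo (y n) < ((qs:ℝ):EReal) := by
      have := hqs_child; rw [Nd.mem_V_iff, Nd.step_lo] at this; exact this.1
    have hhi : ((qs:ℝ):EReal) < d.childHi (y n) := by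
      have := hqs_child; rw [Nd.mem_V_iff, Nd.step_hi] at this; exact this.2
    by_cases he : Even (n+1)
    · rw [if_pos he] at hqs_notin
      simp only [Set.mem_setOf_eq, not_and] at hqs_notin
      have : ¬ qs < d.t (y n) := fun hc => hqs_notin hlo hc
      simp only [he, not_true, iff_false]
      exact this
    · rw [if_neg he] at hqs_notin
      simp only [Set.mem_setOf_eq, not_and] at hqs_notin
      simp only [he, not_false_iff, iff_true]
      rcases lt_trichotomy qs (d.t (y n)) with h | h | h
      · exact h
      · exact absurd h.symm (fun hc => hno n hn (y n) hc)
      · exact absurd hhi (by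
          intro _
          exact absurd hhi (fun hcon => hqs_notin h hcon) )
  -- survivor relations between consecutive steps: contradiction
  have hG1 := hG N (le_refl N)
  have hG2 := hG (N+1) (by omega)
  have hstep : nodeOf (wpf y (N+1)) = (nodeOf (wpf y N)).step (y N) := wpf_node_succ y N
  set d := nodeOf (wpf y N) with hd
  have hinv : Nd.Inv d := inv_nodeOf _
  have hmn : d.m = N := wpf_m y N
  have hpar : Even (N+1+1) ↔ ¬ Even (N+1) := Nat.even_add_one
  by_cases hyy : y (N+1) = y N
  · have hsurv : (nodeOf (wpf y (N+1))).t (y (N+1)) = d.t (y N) := by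
      rw [hyy, hstep, Nd.step_t_self]
    rw [hsurv] at hG2
    have h5 : ¬ Even (N+1) ↔ ¬ Even (N+1+1) := hG1.symm.trans hG2
    by_cases hE : Even (N+1)
    · exact (h5.2 (fun hc => (hpar.1 hc) hE)) hE
    · exact (h5.1 hE) (hpar.2 hE)
  · have hyb : y (N+1) = !(y N) := by cases hh : y N <;> cases hh2 : y (N+1) <;> simp_all
    have hsurv : (nodeOf (wpf y (N+1))).t (y (N+1)) = d.fresh (y N) := by
      rw [hyb, hstep, Nd.step_t_other]
    rw [hsurv] at hG2
    have hside := hinv.fresh_side (y N)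
    rw [hmn] at hside
    have hqs_ne : qs ≠ d.t (y N) := fun hc => hno N (le_refl N) (y N) hc.symm
    by_cases he : Even (N+1)
    · have hf : d.fresh (y N) < d.t (y N) := hside.1 he
      have h1 : ¬ qs < d.t (y N) := fun hc => (hG1.1 hc) he
      have h2 : d.t (y N) < qs := lt_of_le_of_ne (not_lt.1 h1) (fun hc => hqs_ne hc.symm)
      have h3 : qs < d.fresh (y N) := hG2.2 (by rw [hpar]; exact fun hc => hc he)
      linarith
    · have hf : d.t (y N) < d.fresh (y N) := hside.2 he
      have h1 : qs < d.t (y N) := hG1.2 he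
      have h3 : ¬ qs < d.fresh (y N) := fun hc => (hG2.1 hc) (hpar.2 he)
      linarith


/-! ### the canonical branch of a rational -/

lemma mem_root_V (x : ℝ) : x ∈ Nd.root.V :=
  ⟨EReal.bot_lt_coe x, EReal.coe_lt_top x⟩

/-- the bits of the canonical branch of a rational -/
def rbW (r : ℚ) : ℕ → List Bool
  | 0 => []
  | n+1 => rbW r n ++ [if ((r:ℝ)) ∈ (nodeOf (rbW r n ++ [true])).V then true else false]

def rbit (r : ℚ) (n : ℕ) : Bool :=
  if ((r:ℝ)) ∈ (nodeOf (rbW r n ++ [true])).V then true else false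

lemma rbW_succ (r : ℚ) (n : ℕ) : rbW r (n+1) = rbW r n ++ [rbit r n] := rfl

lemma rbW_length (r : ℚ) (n : ℕ) : (rbW r n).length = n := by
  induction n with
  | zero => rfl
  | succ n ih => rw [rbW_succ, List.length_append, ih, List.length_singleton]

lemma rbW_mem (r : ℚ) (n : ℕ) : ((r:ℝ)) ∈ (nodeOf (rbW r n)).V := by
  induction n with
  | zero => exact mem_root_V _
  | succ n ih =>
      rw [rbW_succ, rbit]
      split
      · assumption
      · rcases rat_mem_child (rbW r n) ih with ⟨b, hb⟩
        cases b
        · exact hb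
        · simp_all

lemma rbW_eq_wpf (r : ℚ) (n : ℕ) : rbW r n = wpf (rbit r) n := by
  induction n with
  | zero => rfl
  | succ n ih => rw [rbW_succ, wpf_succ, ih]

lemma rbW_prefix (r : ℚ) {m n : ℕ} (h : m ≤ n) : rbW r m <+: rbW r n := by
  induction n with
  | zero => rw [Nat.le_zero.1 h]
  | succ n ih =>
      rcases Nat.lt_or_ge m (n+1) with hlt | hge
      · exact (ih (by omega)).trans ⟨[rbit r n], (rbW_succ r n).symm⟩
      · have : m = n + 1 := by omega
        rw [this]

/-- uniqueness of the branch through a rational -/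
lemma branch_unique {r : ℚ} {w : List Bool} (hw : ((r:ℝ)) ∈ (nodeOf w).V) :
    w = rbW r w.length := by
  by_contra hne
  exact nodeOf_level_disjoint (by rw [rbW_length]) hne hw (rbW_mem r w.length)

/-- every rational's canonical branch is eventually constant -/
lemma rbit_ec (r : ℚ) : ∃ N b, ∀ k, N ≤ k → rbit r k = b := by
  apply branch_ec (rbit r) r
  intro n
  rw [← rbW_eq_wpf]
  exact rbW_mem r n

/-- a rational lying in all nodes of a constant chain is the pin -/
lemma rat_eq_pin {w : List Bool} {b : Bool} {r : ℚ}
    (h : ∀ n, ((r:ℝ)) ∈ (nodeOf (w ++ List.replicate n b)).V) : r = pin w b := by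
  have hh : ∀ n, |((r:ℝ)) - ((pin w b : ℝ))| < (1/2:ℝ)^(w.length + (n+1)) :=
    fun n => chain_shrink w b n (h (n+3))
  have : ((r:ℝ)) = ((pin w b : ℝ)) := by
    by_contra hne
    have hpos : 0 < |((r:ℝ)) - ((pin w b : ℝ))| := abs_pos.2 (sub_ne_zero.2 hne)
    obtain ⟨n, hn⟩ := exists_pow_lt_of_lt_one hpos (by norm_num : (1/2:ℝ) < 1)
    have hle : (1/2:ℝ)^(w.length + (n+1)) ≤ (1/2:ℝ)^n := by
      apply pow_le_pow_of_le_one <;> [norm_num; norm_num; omega]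
    exact absurd (lt_of_lt_of_le (hh n) hle) (not_lt.2 hn.le)
  exact_mod_cast this

/-- the chain eventually lies in any ball around the pin -/
lemma chain_closure_subset (w : List Bool) (b : Bool) {ε : ℝ} (hε : 0 < ε) :
    ∃ n0, ∀ n, n0 ≤ n → closure ((nodeOf (w ++ List.replicate n b)).V) ⊆
      Metric.ball ((pin w b : ℝ)) ε := by
  obtain ⟨k, hk⟩ := exists_pow_lt_of_lt_one hε (by norm_num : (1/2:ℝ) < 1)
  refine ⟨k + 3, fun n hn => ?_⟩
  obtain ⟨j, rfl⟩ : ∃ j, n = j + 3 := ⟨n - 3, by omega⟩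
  set c := (1/2:ℝ)^(w.length + (j+1)) with hc
  have hcpos : 0 < c := by positivity
  have hsub : (nodeOf (w ++ List.replicate (j+3) b)).V ⊆ Metric.closedBall ((pin w b:ℝ)) c := by
    intro x hx
    rw [Metric.mem_closedBall, Real.dist_eq]
    exact (chain_shrink w b j hx).le
  have hcl : closure ((nodeOf (w ++ List.replicate (j+3) b)).V) ⊆
      Metric.closedBall ((pin w b:ℝ)) c :=
    closure_minimal hsub Metric.isClosed_closedBall
  refine hcl.trans ?_
  intro x hx
  rw [Metric.mem_closedBall] at hx
  rw [Metric.mem_ball]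
  have hck : c ≤ (1/2:ℝ)^k := by
    apply pow_le_pow_of_le_one <;> [norm_num; norm_num; omega]
  calc dist x ((pin w b:ℝ)) ≤ c := hx
    _ ≤ (1/2:ℝ)^k := hck
    _ < ε := hk

/-- prefixes along an eventually constant function -/
lemma wpf_tail (x : ℕ → Bool) {N : ℕ} {b : Bool} (hx : ∀ k, N ≤ k → x k = b) :
    ∀ n, wpf x (N + n) = wpf x N ++ List.replicate n b := by
  intro n
  induction n with
  | zero => rw [Nat.add_zero, List.replicate_zero, List.append_nil]
  | succ n ih =>
      have h1 : N + (n+1) = (N + n) + 1 := by omega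
      rw [h1, wpf_succ, ih, hx (N+n) (by omega), chain_concat]

lemma wpf_prefix_le (x : ℕ → Bool) {m n : ℕ} (h : m ≤ n) : wpf x m <+: wpf x n := by
  induction n with
  | zero => rw [Nat.le_zero.1 h]
  | succ n ih =>
      rcases Nat.lt_or_ge m (n+1) with hlt | hge
      · exact (ih (by omega)).trans ⟨[x n], (wpf_succ x n).symm⟩
      · have : m = n + 1 := by omega
        rw [this]

/-- the pin of an eventually constant branch lies in all its nodes -/
lemma pin_mem_wpf (x : ℕ → Bool) {N : ℕ} {b : Bool} (hx : ∀ k, N ≤ k → x k = b) (n : ℕ) :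
    ((pin (wpf x N) b : ℝ)) ∈ (nodeOf (wpf x n)).V := by
  rcases Nat.le_total n N with hle | hge
  · exact nodeOf_prefix_subset (wpf_prefix_le x hle) (pin_mem (wpf x N) b)
  · have := pin_mem_chain (wpf x N) b (n - N)
    rwa [← wpf_tail x hx, Nat.add_sub_cancel' hge] at this


/-! ### topology lemmas -/

lemma V_isOpen (d : Nd) : IsOpen d.V := by
  have h1 : IsOpen {x : ℝ | d.lo < (x:EReal)} :=
    isOpen_Ioi.preimage continuous_coe_real_ereal
  have h2 : IsOpen {x : ℝ | (x:EReal) < d.hi} :=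
    isOpen_Iio.preimage continuous_coe_real_ereal
  exact h1.inter h2

lemma rat_preimage_open {S : Set ℝ} (hS : IsOpen S) : IsOpen {q : ℚ | ((q:ℝ)) ∈ S} :=
  hS.preimage Rat.continuous_coe_real

lemma mem_ratBasis_iff (e : ℕ → ℚ × ℚ) (n : ℕ) (q : ℚ) :
    q ∈ ratBasis e n ↔ ((q:ℝ)) ∈ Set.Ioo ((e n).1 : ℝ) ((e n).2 : ℝ) := by
  rw [ratBasis, Set.mem_Ioo, Set.mem_Ioo]
  constructor <;> intro h <;> exact ⟨by exact_mod_cast h.1, by exact_mod_cast h.2⟩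

lemma exists_basic {e : ℕ → ℚ × ℚ} (he : Function.Surjective e) {U : Set ℝ}
    (hU : IsOpen U) {r : ℚ} (hr : ((r:ℝ)) ∈ U) :
    ∃ n, r ∈ ratBasis e n ∧ (e n).1 < (e n).2 ∧
      Set.Ioo ((e n).1 : ℝ) ((e n).2 : ℝ) ⊆ U := by
  rcases Metric.isOpen_iff.1 hU _ hr with ⟨ε, hε, hball⟩
  obtain ⟨u, hu1, hu2⟩ := exists_rat_btwn (by linarith : (r:ℝ) - ε < (r:ℝ))
  obtain ⟨v, hv1, hv2⟩ := exists_rat_btwn (by linarith : (r:ℝ) < (r:ℝ) + ε)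
  obtain ⟨n, hn⟩ := he (u, v)
  have he1 : ((e n).1 : ℝ) = (u:ℝ) := by rw [hn]
  have he2 : ((e n).2 : ℝ) = (v:ℝ) := by rw [hn]
  refine ⟨n, ?_, ?_, ?_⟩
  · rw [mem_ratBasis_iff, he1, he2]; exact ⟨hu2, hv1⟩
  · rw [hn]; exact_mod_cast lt_trans hu2 hv1
  · rw [he1, he2]
    intro x hx
    apply hball
    rw [Metric.mem_ball, Real.dist_eq, abs_lt]
    rcases hx with ⟨h1, h2⟩
    constructor <;> linarith

/-! ### the closed set associated to a tree -/

def ATs (T : Set (List Bool)) : Set ℚ := {r | ∀ n, rbW r n ∈ T}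

lemma ATs_closed (T : Set (List Bool)) : IsClosed (ATs T) := by
  rw [← isOpen_compl_iff]
  rw [isOpen_iff_forall_mem_open]
  intro r hr
  rw [Set.mem_compl_iff, ATs, Set.mem_setOf_eq] at hr
  push_neg at hr
  rcases hr with ⟨n, hn⟩
  refine ⟨{q : ℚ | ((q:ℝ)) ∈ (nodeOf (rbW r n)).V}, ?_, rat_preimage_open (V_isOpen _), ?_⟩
  · intro q hq
    have hb : rbW r n = rbW q ((rbW r n).length) := branch_unique hq
    rw [rbW_length] at hb
    rw [Set.mem_compl_iff, ATs, Set.mem_setOf_eq]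
    push_neg
    exact ⟨n, by rw [← hb]; exact hn⟩
  · exact rbW_mem r n

lemma rbW_pin_le {w : List Bool} {b : Bool} {n : ℕ} (h : n ≤ w.length) :
    rbW (pin w b) n = List.take n w := by
  have hmem : ((pin w b : ℝ)) ∈ (nodeOf (List.take n w)).V :=
    nodeOf_prefix_subset (List.take_prefix n w) (pin_mem w b)
  have := branch_unique hmem
  rw [List.length_take, min_eq_left h] at this
  exact this.symm

lemma rbW_pin_ge {w : List Bool} {b : Bool} {n : ℕ} (h : w.length ≤ n) :
    rbW (pin w b) n = w ++ List.replicate (n - w.length) b := by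
  have hmem := pin_mem_chain w b (n - w.length)
  have := branch_unique hmem
  rw [List.length_append, List.length_replicate, Nat.add_sub_cancel' h] at this
  exact this.symm

/-- the pin of a chain inside a tree belongs to the associated closed set -/
lemma pin_mem_ATs {T : Set (List Bool)} (hpre : ∀ u ∈ T, ∀ v, v <+: u → v ∈ T)
    {w : List Bool} {b : Bool} (hchain : ∀ n, w ++ List.replicate n b ∈ T) :
    pin w b ∈ ATs T := by
  intro n
  rcases Nat.le_total n w.length with hle | hge
  · rw [rbW_pin_le hle]
    exact hpre w (by simpa using hchain 0) _ (List.take_prefix n w)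
  · rw [rbW_pin_ge hge]
    exact hchain _

/-- a member of `ATs T` equals the pin of its eventually constant branch -/
lemma ATs_mem_pin (r : ℚ) :
    ∃ N b, (∀ k, N ≤ k → rbit r k = b) ∧ r = pin (rbW r N) b := by
  obtain ⟨N, b, hNb⟩ := rbit_ec r
  refine ⟨N, b, hNb, ?_⟩
  apply rat_eq_pin
  intro n
  have h1 : rbW r N ++ List.replicate n b = rbW r (N + n) := by
    rw [rbW_eq_wpf, rbW_eq_wpf, wpf_tail (rbit r) hNb n]
  rw [h1]
  exact rbW_mem r (N + n)


/-! ### the reduction maps -/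

/-- a surjective enumeration of binary words -/
def wd : ℕ → List Bool := Classical.choose (exists_surjective_nat (List Bool))

lemma wd_surj : Function.Surjective wd := Classical.choose_spec (exists_surjective_nat (List Bool))

/-- real basic interval -/
def RI (e : ℕ → ℚ × ℚ) (n : ℕ) : Set ℝ := Set.Ioo ((e n).1 : ℝ) ((e n).2 : ℝ)

def TreeOf (code : List Bool → ℕ) (p : ℕ → ℕ) : Set (List Bool) := {w | ∃ k, p k = code w + 1}

def Kmap (code : List Bool → ℕ) (e : ℕ → ℚ × ℚ) (p : ℕ → ℕ) : ℕ → ℕ := fun i =>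
  if ∃ w : List Bool, p (Nat.unpair i).1 = code w + 1 ∧
      closure ((nodeOf w).V) ⊆ RI e (Nat.unpair i).2 then (Nat.unpair i).2 + 1 else 0

def HC (e : ℕ → ℚ × ℚ) (q : ℕ → ℕ) (i t : ℕ) : Prop :=
  (wd (Nat.unpair t).1).length = i + 1 ∧ ∃ k ≤ (Nat.unpair t).2, ∃ n ≤ (Nat.unpair t).2,
    q k = n + 1 ∧ RI e n ⊆ (nodeOf (wd (Nat.unpair t).1)).V

def Hmap (e : ℕ → ℚ × ℚ) (pq : (ℕ → ℕ) × (ℕ → ℕ)) : ℕ → Bool := fun i =>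
  if h : ∃ t, HC e pq.2 i t then (wd (Nat.unpair (Nat.find h)).1).getLastD false else false

def K'map (code : List Bool → ℕ) (e : ℕ → ℚ × ℚ) (p : ℕ → ℕ) : ℕ → ℕ := fun i =>
  if ∃ n : ℕ, p (Nat.unpair i).1 = n + 1 ∧
      RI e n ⊆ (nodeOf (wd (Nat.unpair i).2)).V then code (wd (Nat.unpair i).2) + 1 else 0

def H'map (e : ℕ → ℚ × ℚ) (px : (ℕ → ℕ) × (ℕ → Bool)) : ℕ → ℕ := fun i =>
  if closure ((nodeOf (wpf px.2 (Nat.unpair i).2)).V) ⊆ RI e (Nat.unpair i).1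
  then (Nat.unpair i).1 + 1 else 0

/-- the tree of a closed set -/
def TA (A : Set ℚ) : Set (List Bool) := {w | ∃ a ∈ A, ((a:ℝ)) ∈ (nodeOf w).V}

/-! ### continuity -/

lemma Kmap_cont (code : List Bool → ℕ) (e : ℕ → ℚ × ℚ) : Continuous (Kmap code e) := by
  apply continuous_pi
  intro i
  show Continuous ((fun m : ℕ => if ∃ w : List Bool, m = code w + 1 ∧
      closure ((nodeOf w).V) ⊆ RI e (Nat.unpair i).2 then (Nat.unpair i).2 + 1 else 0) ∘
    (fun p : ℕ → ℕ => p (Nat.unpair i).1))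
  exact continuous_of_discreteTopology.comp (continuous_apply _)

lemma K'map_cont (code : List Bool → ℕ) (e : ℕ → ℚ × ℚ) : Continuous (K'map code e) := by
  apply continuous_pi
  intro i
  show Continuous ((fun m : ℕ => if ∃ n : ℕ, m = n + 1 ∧
      RI e n ⊆ (nodeOf (wd (Nat.unpair i).2)).V then code (wd (Nat.unpair i).2) + 1 else 0) ∘
    (fun p : ℕ → ℕ => p (Nat.unpair i).1))
  exact continuous_of_discreteTopology.comp (continuous_apply _)

lemma H'map_cont (e : ℕ → ℚ × ℚ) : Continuous (H'map e) := by
  apply continuous_pi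
  intro i
  show Continuous ((fun v : Fin (Nat.unpair i).2 → Bool =>
      if closure ((nodeOf (List.ofFn v)).V) ⊆ RI e (Nat.unpair i).1
      then (Nat.unpair i).1 + 1 else 0) ∘
    (fun px : (ℕ → ℕ) × (ℕ → Bool) => fun j : Fin (Nat.unpair i).2 => px.2 j))
  exact continuous_of_discreteTopology.comp
    (continuous_pi fun j => (continuous_apply (j:ℕ)).comp continuous_snd)

lemma HC_transfer (e : ℕ → ℚ × ℚ) {q q' : ℕ → ℕ} {i t : ℕ}
    (hqq : ∀ k, k ≤ t → q' k = q k) (h : HC e q i t) : HC e q' i t := by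
  rcases h with ⟨h1, k, hk, n, hn, hqk, hsub⟩
  exact ⟨h1, k, hk, n, hn, by rw [hqq k (le_trans hk (Nat.unpair_right_le t))]; exact hqk, hsub⟩

lemma Hmap_contOn (e : ℕ → ℚ × ℚ) (S : Set ((ℕ → ℕ) × (ℕ → ℕ)))
    (hS : ∀ pq ∈ S, ∀ i : ℕ, ∃ t, HC e pq.2 i t) : ContinuousOn (Hmap e) S := by
  intro pq hpq
  apply ContinuousAt.continuousWithinAt
  rw [continuousAt_pi]
  intro i
  have h := hS pq hpq i
  set t0 := Nat.find h with ht0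
  set U : Set ((ℕ → ℕ) × (ℕ → ℕ)) :=
    ⋂ k ∈ Finset.range (t0 + 1), {pq' : (ℕ → ℕ) × (ℕ → ℕ) | pq'.2 k = pq.2 k} with hU
  have hUopen : IsOpen U := by
    apply isOpen_biInter_finset
    intro k _
    have hco : Continuous (fun pq' : (ℕ → ℕ) × (ℕ → ℕ) => pq'.2 k) :=
      (continuous_apply k).comp continuous_snd
    have := hco.isOpen_preimage ({pq.2 k} : Set ℕ) (isOpen_discrete _)
    exact this
  have hUmem : pq ∈ U := by
    rw [hU]; simp
  have hagree : ∀ pq' ∈ U, ∀ k, k ≤ t0 → pq'.2 k = pq.2 k := by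
    intro pq' hpq' k hk
    rw [hU] at hpq'
    simp only [Set.mem_iInter, Finset.mem_range, Set.mem_setOf_eq] at hpq'
    exact hpq' k (by omega)
  have hval : ∀ pq' ∈ U, Hmap e pq' i = Hmap e pq i := by
    intro pq' hpq'
    have hex' : ∃ t, HC e pq'.2 i t := by
      refine ⟨t0, HC_transfer e (fun k hk => hagree pq' hpq' k hk) (Nat.find_spec h)⟩
    have hfind' : Nat.find hex' = t0 := by
      rw [Nat.find_eq_iff]
      constructor
      · exact HC_transfer e (fun k hk => hagree pq' hpq' k hk) (Nat.find_spec h)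
      · intro m hm hcon
        exact Nat.find_min h hm (HC_transfer e
          (fun k hk => (hagree pq' hpq' k (by omega)).symm) hcon)
    rw [Hmap, dif_pos hex', hfind', Hmap, dif_pos h]
  apply Filter.EventuallyEq.continuousAt (y := Hmap e pq i)
  filter_upwards [hUopen.mem_nhds hUmem] with pq' hpq'
  rw [hval pq' hpq']


/-! ### correctness lemmas -/

lemma wpf_tail' (x : ℕ → Bool) {N M : ℕ} {b : Bool} (hx : ∀ k, N ≤ k → x k = b)
    (hM : N ≤ M) (n : ℕ) : wpf x (M + n) = wpf x M ++ List.replicate n b := by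
  obtain ⟨j, rfl⟩ : ∃ j, M = N + j := ⟨M - N, by omega⟩
  have h1 : N + j + n = N + (j + n) := by omega
  rw [h1, wpf_tail x hx (j + n), wpf_tail x hx j, List.replicate_add, List.append_assoc]

lemma rbW_tail (r : ℚ) {N M : ℕ} {b : Bool} (hx : ∀ k, N ≤ k → rbit r k = b)
    (hM : N ≤ M) (n : ℕ) : rbW r (M + n) = rbW r M ++ List.replicate n b := by
  rw [rbW_eq_wpf, rbW_eq_wpf, wpf_tail' (rbit r) hx hM n]

lemma TA_ecp {A : Set ℚ} (hA : A.Nonempty) : ECPTree (TA A) := by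
  obtain ⟨a0, ha0⟩ := hA
  refine ⟨⟨[], a0, ha0, mem_root_V _⟩, ?_, ?_⟩
  · rintro w ⟨a, ha, haV⟩ u hu
    exact ⟨a, ha, nodeOf_prefix_subset hu haV⟩
  · rintro w ⟨a, ha, haV⟩
    have hwb : w = rbW a w.length := branch_unique haV
    obtain ⟨N, b, hNb⟩ := rbit_ec a
    set M := max N w.length with hM
    refine ⟨rbW a M, ⟨a, ha, rbW_mem a M⟩, ?_, b, ?_⟩
    · rw [hwb]; exact rbW_prefix a (le_max_right N w.length)
    · intro n
      have := rbW_tail a hNb (le_max_left N w.length) n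
      rw [← this]
      exact ⟨a, ha, rbW_mem a (M + n)⟩

lemma K'T_eq {code : List Bool → ℕ} (hcode : Function.Injective code)
    {e : ℕ → ℚ × ℚ} (he : Function.Surjective e) {A : Set ℚ} {p : ℕ → ℕ}
    (hp : ClosedName (ratBasis e) A p) :
    TreeOf code (K'map code e p) = TA A := by
  have hp' : {n | (ratBasis e n ∩ A).Nonempty} = {n | ∃ k, p k = n + 1} := hp
  ext w
  constructor
  · rintro ⟨i, hi⟩
    rw [K'map] at hi
    split at hi
    · next hcond =>
        rcases hcond with ⟨n, hpk, hRI⟩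
        have hwdw : wd (Nat.unpair i).2 = w := hcode (by omega)
        have hn : n ∈ {n | (ratBasis e n ∩ A).Nonempty} := by
          rw [hp']; exact ⟨(Nat.unpair i).1, hpk⟩
        rcases hn with ⟨a, haB, haA⟩
        refine ⟨a, haA, ?_⟩
        rw [← hwdw]
        exact hRI ((mem_ratBasis_iff e n a).1 haB)
    · omega
  · rintro ⟨a, ha, haV⟩
    obtain ⟨n, hBn, _, hsub⟩ := exists_basic he (V_isOpen (nodeOf w)) haV
    have hn : n ∈ {n | ∃ k, p k = n + 1} := by
      rw [← hp']; exact ⟨a, hBn, ha⟩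
    rcases hn with ⟨k, hk⟩
    obtain ⟨j, hj⟩ := wd_surj w
    refine ⟨Nat.pair k j, ?_⟩
    rw [K'map, Nat.unpair_pair]
    rw [if_pos ⟨n, hk, by rw [hj]; exact hsub⟩, hj]

lemma Kmap_name {code : List Bool → ℕ} {e : ℕ → ℚ × ℚ} (he : Function.Surjective e)
    {T : Set (List Bool)} {p : ℕ → ℕ} (hT : ECPTree T) (hE : T = TreeOf code p) :
    Enumerates (Kmap code e p) {n | (ratBasis e n ∩ ATs T).Nonempty} := by
  rw [Enumerates]
  ext n
  constructor
  · rintro ⟨r, hrB, hrA⟩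
    obtain ⟨N, b, hNb, hpin⟩ := ATs_mem_pin r
    obtain ⟨ε, hε, hball⟩ := Metric.isOpen_iff.1 isOpen_Ioo ((r:ℝ))
      ((mem_ratBasis_iff e n r).1 hrB)
    obtain ⟨n0, hn0⟩ := chain_closure_subset (rbW r N) b hε
    have hw2 : rbW r (N + n0) = rbW r N ++ List.replicate n0 b := rbW_tail r hNb (le_refl N) n0
    have hcl : closure ((nodeOf (rbW r (N + n0))).V) ⊆ RI e n := by
      rw [hw2]
      refine (hn0 n0 (le_refl n0)).trans ?_
      rw [← hpin]
      exact hball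
    have hwT : rbW r (N + n0) ∈ T := hrA (N + n0)
    rw [hE, TreeOf] at hwT
    rcases hwT with ⟨k, hk⟩
    refine ⟨Nat.pair k n, ?_⟩
    rw [Kmap, Nat.unpair_pair]
    rw [if_pos ⟨rbW r (N + n0), hk, hcl⟩]
  · rintro ⟨i, hi⟩
    rw [Kmap] at hi
    split at hi
    · next hcond =>
        rcases hcond with ⟨w, hpw, hcl⟩
        have hn2 : (Nat.unpair i).2 = n := by omega
        have hwT : w ∈ T := by rw [hE]; exact ⟨(Nat.unpair i).1, hpw⟩
        obtain ⟨u, huT, hwu, b, hchain⟩ := hT.2.2 w hwT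
        refine ⟨pin u b, ?_, pin_mem_ATs hT.2.1 hchain⟩
        rw [mem_ratBasis_iff]
        have h1 : ((pin u b : ℝ)) ∈ (nodeOf w).V :=
          nodeOf_prefix_subset hwu (pin_mem u b)
        have := hcl (subset_closure h1)
        rwa [hn2] at this
    · omega

lemma Hmap_domain {e : ℕ → ℚ × ℚ} (he : Function.Surjective e) {x : ℚ} {q : ℕ → ℕ}
    (hq : PointName (ratBasis e) x q) : ∀ i, ∃ t, HC e q i t := by
  intro i
  obtain ⟨n, hBn, _, hsub⟩ := exists_basic he (V_isOpen (nodeOf (rbW x (i+1)))) (rbW_mem x (i+1))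
  have hq' : {m | x ∈ ratBasis e m} = {m | ∃ k, q k = m + 1} := hq
  have : n ∈ {m | ∃ k, q k = m + 1} := by rw [← hq']; exact hBn
  rcases this with ⟨k, hk⟩
  obtain ⟨j, hj⟩ := wd_surj (rbW x (i+1))
  refine ⟨Nat.pair j (max k n), ?_⟩
  rw [HC, Nat.unpair_pair]
  refine ⟨by rw [hj, rbW_length], k, le_max_left k n, n, le_max_right k n, hk, ?_⟩
  rw [hj]; exact hsub

lemma Hmap_eq {e : ℕ → ℚ × ℚ} (he : Function.Surjective e) {x : ℚ} {p q : ℕ → ℕ}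
    (hq : PointName (ratBasis e) x q) : Hmap e (p, q) = rbit x := by
  funext i
  have h : ∃ t, HC e q i t := Hmap_domain he hq i
  rw [Hmap, dif_pos h]
  obtain ⟨hlen, k, hk, n, hn, hqk, hsub⟩ := Nat.find_spec h
  have hq' : {m | x ∈ ratBasis e m} = {m | ∃ k, q k = m + 1} := hq
  have hBn : x ∈ ratBasis e n := by
    have : n ∈ {m | ∃ k, q k = m + 1} := ⟨k, hqk⟩
    rw [← hq'] at this; exact this
  have hxV : ((x:ℝ)) ∈ (nodeOf (wd (Nat.unpair (Nat.find h)).1)).V :=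
    hsub ((mem_ratBasis_iff e n x).1 hBn)
  have hweq : wd (Nat.unpair (Nat.find h)).1 = rbW x (i+1) := by
    have := branch_unique hxV
    rwa [hlen] at this
  rw [hweq, rbW_succ, List.getLastD_concat]

end ECPOC

/-- ECP is topologically Weihrauch equivalent to overt choice for ℚ. -/
theorem ECP_equiv_overt_choice_rat (code : List Bool → ℕ) (hcode : Function.Injective code)
    (e : ℕ → ℚ × ℚ) (he : Function.Surjective e) :
    -- (1) ECP is reducible to overt choice for ℚ
    (∃ (K : (ℕ → ℕ) → (ℕ → ℕ)) (Aset : (ℕ → ℕ) → Set ℚ)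
        (H : (ℕ → ℕ) × (ℕ → ℕ) → (ℕ → Bool)),
      ContinuousOn K {p | ∃ T, ECPTree T ∧ EnumeratesTree code p T} ∧
      (∀ (p : ℕ → ℕ) (T : Set (List Bool)), ECPTree T → EnumeratesTree code p T →
        (Aset p).Nonempty ∧ IsClosed (Aset p) ∧ ClosedName (ratBasis e) (Aset p) (K p)) ∧
      ContinuousOn H {pq : (ℕ → ℕ) × (ℕ → ℕ) |
        (∃ T, ECPTree T ∧ EnumeratesTree code pq.1 T) ∧
        ∃ x ∈ Aset pq.1, PointName (ratBasis e) x pq.2} ∧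
      (∀ (p : ℕ → ℕ) (T : Set (List Bool)), ECPTree T → EnumeratesTree code p T →
        ∀ (q : ℕ → ℕ) (x : ℚ), x ∈ Aset p → PointName (ratBasis e) x q →
          ECPath T (H (p, q)))) ∧
    -- (2) overt choice for ℚ is reducible to ECP
    (∃ (K' : (ℕ → ℕ) → (ℕ → ℕ)) (Tset : (ℕ → ℕ) → Set (List Bool))
        (H' : (ℕ → ℕ) × (ℕ → Bool) → (ℕ → ℕ)),
      ContinuousOn K' {p | ∃ A : Set ℚ, A.Nonempty ∧ IsClosed A ∧
        ClosedName (ratBasis e) A p} ∧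
      (∀ (p : ℕ → ℕ) (A : Set ℚ), A.Nonempty → IsClosed A → ClosedName (ratBasis e) A p →
        ECPTree (Tset p) ∧ EnumeratesTree code (K' p) (Tset p)) ∧
      ContinuousOn H' {px : (ℕ → ℕ) × (ℕ → Bool) |
        (∃ A : Set ℚ, A.Nonempty ∧ IsClosed A ∧ ClosedName (ratBasis e) A px.1) ∧
        ECPath (Tset px.1) px.2} ∧
      (∀ (p : ℕ → ℕ) (A : Set ℚ), A.Nonempty → IsClosed A → ClosedName (ratBasis e) A p →
        ∀ x : ℕ → Bool, ECPath (Tset p) x →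
          ∃ q ∈ A, PointName (ratBasis e) q (H' (p, x)))) := by
  constructor
  · -- part (1)
    refine ⟨ECPOC.Kmap code e, fun p => ECPOC.ATs (ECPOC.TreeOf code p), ECPOC.Hmap e,
      (ECPOC.Kmap_cont code e).continuousOn, ?_, ?_, ?_⟩
    · intro p T hT hE
      have hE' : T = ECPOC.TreeOf code p := hE
      dsimp only
      rw [← hE']
      refine ⟨?_, ECPOC.ATs_closed T, ECPOC.Kmap_name he hT hE'⟩
      obtain ⟨w0, hw0⟩ := hT.1
      have hnil : [] ∈ T := hT.2.1 w0 hw0 [] (List.nil_prefix)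
      obtain ⟨u, huT, _, b, hchain⟩ := hT.2.2 [] hnil
      exact ⟨ECPOC.pin u b, ECPOC.pin_mem_ATs hT.2.1 hchain⟩
    · apply ECPOC.Hmap_contOn
      rintro pq ⟨-, x, hx, hq⟩
      exact ECPOC.Hmap_domain he hq
    · intro p T hT hE q x hx hq
      have hE' : T = ECPOC.TreeOf code p := hE
      have hH : ECPOC.Hmap e (p, q) = ECPOC.rbit x := ECPOC.Hmap_eq he hq
      rw [hH]
      have hx' : x ∈ ECPOC.ATs (ECPOC.TreeOf code p) := hx
      rw [← hE'] at hx'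
      constructor
      · intro n
        have h1 : (List.ofFn fun i : Fin n => ECPOC.rbit x i) = ECPOC.rbW x n := by
          rw [ECPOC.rbW_eq_wpf]; rfl
        rw [h1]
        exact hx' n
      · exact ECPOC.rbit_ec x
  · -- part (2)
    refine ⟨ECPOC.K'map code e, fun p => ECPOC.TreeOf code (ECPOC.K'map code e p),
      ECPOC.H'map e, (ECPOC.K'map_cont code e).continuousOn, ?_,
      (ECPOC.H'map_cont e).continuousOn, ?_⟩
    · intro p A hA hAc hp
      constructor
      · dsimp only
        rw [ECPOC.K'T_eq hcode he hp]
        exact ECPOC.TA_ecp hA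
      · rfl
    · intro p A hA hAc hp x hxpath
      dsimp only at hxpath
      rw [show ECPOC.TreeOf code (ECPOC.K'map code e p) = ECPOC.TA A
        from ECPOC.K'T_eq hcode he hp] at hxpath
      obtain ⟨hpref, N, b, hNb⟩ := hxpath
      set η := ECPOC.pin (ECPOC.wpf x N) b with hη
      have hpref' : ∀ n, ECPOC.wpf x n ∈ ECPOC.TA A := fun n => hpref n
      have hηA : η ∈ A := by
        have hclA : η ∈ closure A := by
          rw [Metric.mem_closure_iff]
          intro ε hε
          obtain ⟨n0, hn0⟩ := ECPOC.chain_closure_subset (ECPOC.wpf x N) b hε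
          have hw : ECPOC.wpf x (N + n0) = ECPOC.wpf x N ++ List.replicate n0 b :=
            ECPOC.wpf_tail x hNb n0
          obtain ⟨a, haA, haV⟩ := hpref' (N + n0)
          refine ⟨a, haA, ?_⟩
          have hball : ((a:ℝ)) ∈ Metric.ball ((η:ℝ)) ε := by
            apply hn0 n0 (le_refl _)
            rw [← hw]
            exact subset_closure haV
          rw [Metric.mem_ball, Real.dist_eq] at hball
          rw [Rat.dist_eq, abs_sub_comm]
          exact hball
        rwa [hAc.closure_eq] at hclA
      refine ⟨η, hηA, ?_⟩
      rw [PointName, Enumerates]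
      ext n
      simp only [Set.mem_setOf_eq]
      constructor
      · intro hBn
        obtain ⟨ε, hε, hball⟩ := Metric.isOpen_iff.1 isOpen_Ioo ((η:ℝ))
          ((ECPOC.mem_ratBasis_iff e n η).1 hBn)
        obtain ⟨n0, hn0⟩ := ECPOC.chain_closure_subset (ECPOC.wpf x N) b hε
        have hw : ECPOC.wpf x (N + n0) = ECPOC.wpf x N ++ List.replicate n0 b :=
          ECPOC.wpf_tail x hNb n0
        refine ⟨Nat.pair n (N + n0), ?_⟩
        rw [ECPOC.H'map, Nat.unpair_pair]
        rw [if_pos ?_]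
        rw [hw]
        exact (hn0 n0 (le_refl _)).trans hball
      · rintro ⟨i, hi⟩
        rw [ECPOC.H'map] at hi
        split at hi
        · next hcond =>
            have hn1 : (Nat.unpair i).1 = n := by omega
            have hmem : ((η:ℝ)) ∈ closure ((ECPOC.nodeOf (ECPOC.wpf x (Nat.unpair i).2)).V) :=
              subset_closure (ECPOC.pin_mem_wpf x hNb (Nat.unpair i).2)
            have h2 := hcond hmem
            rw [hn1] at h2
            exact (ECPOC.mem_ratBasis_iff e n η).2 h2
        · omega
end
end
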